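/- arXiv:1405.3018 — 2 statements merged into one kernel-verified Lean document; each statement's English description precedes it below -/
import Mathlib

section
/- Assume t_0 ≠ 1 and for t ∈ (0,1) set τ_j = t^{n−j} t_0 and τ̂_j = t^{n−j} t̂_0 (j = 1,…,n), and define V_j^+(λ;t) = τ̂_1^{−1} ∏_{r=0}^{3}(1 − t_r τ_j q^{λ_j}) / [(1 − τ_j² q^{2λ_j})(1 − τ_j² q^{2λ_j+1})] · ∏_{k≠j} [(1 − t τ_j τ_k q^{λ_j+λ_k})(1 − t τ_j τ_k^{−1} q^{λ_j−λ_k})] / [(1 − τ_j τ_k q^{λ_j+λ_k})(1 − τ_j τ_k^{−1} q^{λ_j−λ_k})] and V_j^−(λ;t) = τ̂_1 ∏_{r=0}^{3}(1 − t_r^{−1} τ_j q^{λ_j}) / [(1 − τ_j² q^{2λ_j})(1 − τ_j² q^{2λ_j−1})] · ∏_{k≠j} [(1 − t^{−1} τ_j τ_k q^{λ_j+λ_k})(1 − t^{−1} τ_j τ_k^{−1} q^{λ_j−λ_k})] / [(1 − τ_j τ_k q^{λ_j+λ_k})(1 − τ_j τ_k^{−1} q^{λ_j−λ_k})]. Then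 for every λ ∈ Λ and 1 ≤ j ≤ n: if λ + e_j ∈ Λ then lim_{t→0^+} τ̂_j V_j^+(λ;t) = v_j^+(λ), and if λ − e_j ∈ Λ then lim_{t→0^+} τ̂_j^{−1} V_j^−(λ;t) = v_j^−(λ), where v_j^+(λ) = (1 − q^{λ_{j−1}−λ_j}) for 2 ≤ j < n, v_1^+(λ) = 1, v_n^+(λ) = (1 − q^{λ_{n−1}−λ_n}) ∏_{r=0}^{3}(1 − t_r t_0 q^{λ_n}) / [(1 − t_0² q^{2λ_n})(1 − t_0² q^{2λ_n+1})], v_j^−(λ) = (1 − q^{λ_j−λ_{j+1}}) for 1 ≤ j < n−1, v_{n−1}^−(λ) = (1 − q^{λ_{n−1}−λ_n})(1 − t_0² q^{λ_{n−1}+λ_n}), and v_n^−(λ) = (1 − t_0² q^{λ_{n−1}+λ_n}) ∏_{r=0}^{3}(1 − t_r^{−1} t_0 q^{λ_n}) / [(1 − t_0² q^{2λ_n})(1 − t_0² q^{2λ_n−1})]. (t → 0 limits of the Macdonald–Koornwinder Pieri coefficients.) -/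
open scoped BigOperators
open MeasureTheory Filter

noncomputable section

attribute [local instance] Classical.propDecidable

/-- `lam` is a partition: weakly decreasing with nonnegative entries. -/
def IsPart {n : ℕ} (lam : Fin n → ℤ) : Prop :=
  (∀ j k : Fin n, j ≤ k → lam k ≤ lam j) ∧ ∀ j, 0 ≤ lam j

/-- hyperoctahedral dominance order (non-strict). -/
def domLE {n : ℕ} (mu lam : Fin n → ℤ) : Prop :=
  ∀ k : Fin n, ∑ j ∈ Finset.univ.filter (fun j : Fin n => j ≤ k), mu j
             ≤ ∑ j ∈ Finset.univ.filter (fun j : Fin n => j ≤ k), lam j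

/-- strict dominance order. -/
def domLT {n : ℕ} (mu lam : Fin n → ℤ) : Prop := domLE mu lam ∧ mu ≠ lam

/-- action of a signed permutation on an integer vector. -/
def signAct {n : ℕ} (σ : Equiv.Perm (Fin n)) (ε : Fin n → Bool) (v : Fin n → ℤ) :
    Fin n → ℤ := fun j => (if ε j then 1 else -1) * v (σ j)

/-- the orbit of `lam` under the hyperoctahedral group `W`, as a finite set. -/
def Worbit {n : ℕ} (lam : Fin n → ℤ) : Finset (Fin n → ℤ) :=
  Finset.image (fun w : Equiv.Perm (Fin n) × (Fin n → Bool) => signAct w.1 w.2 lam)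
    Finset.univ

/-- hyperoctahedral monomial symmetric function `m_λ`. -/
def mSym {n : ℕ} (lam : Fin n → ℤ) (ξ : Fin n → ℝ) : ℂ :=
  ∑ mu ∈ Worbit lam, Complex.exp (Complex.I * ∑ j, (mu j : ℂ) * (ξ j : ℂ))

/-- finite q-Pochhammer symbol (real). -/
def qPochR (q x : ℝ) (m : ℕ) : ℝ := ∏ l ∈ Finset.range m, (1 - x * q ^ l)

/-- infinite q-Pochhammer symbol (complex). -/
def qPochInf (q x : ℂ) : ℂ := ∏' l : ℕ, (1 - x * q ^ l)

/-- infinite q-Pochhammer symbol (real). -/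
def qPochInfR (q x : ℝ) : ℝ := ∏' l : ℕ, (1 - x * q ^ l)

/-- the weight function Δ̂. -/
def qwWeight {n : ℕ} (q : ℝ) (th : Fin 4 → ℝ) (ξ : Fin n → ℝ) : ℝ :=
  (2 * Real.pi)⁻¹ ^ n *
  (∏ p ∈ Finset.univ.filter (fun p : Fin n × Fin n => p.1 < p.2),
      ‖(qPochInf (q : ℂ) (Complex.exp (Complex.I * ((ξ p.1 : ℂ) + (ξ p.2 : ℂ)))) *
        qPochInf (q : ℂ) (Complex.exp (Complex.I * ((ξ p.1 : ℂ) - (ξ p.2 : ℂ)))))‖ ^ 2) *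
  ∏ j, ‖(qPochInf (q : ℂ) (Complex.exp (2 * Complex.I * (ξ j : ℂ))) /
        ∏ r, qPochInf (q : ℂ) ((th r : ℂ) * Complex.exp (Complex.I * (ξ j : ℂ))))‖ ^ 2

/-- the hyperoctahedral Weyl alcove 𝔸. -/
def alcove (n : ℕ) : Set (Fin n → ℝ) :=
  {ξ | StrictAnti ξ ∧ ∀ j, 0 < ξ j ∧ ξ j < Real.pi}

/-- deformed hyperoctahedral q-Whittaker family. -/
def IsQWhitFam {n : ℕ} (q : ℝ) (th : Fin 4 → ℝ)
    (p : (Fin n → ℤ) → (Fin n → ℝ) → ℂ) : Prop :=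
  ∀ lam : Fin n → ℤ, IsPart lam →
    (∃ c : (Fin n → ℤ) → ℂ, (Function.support c).Finite ∧
        (∀ mu, c mu ≠ 0 → IsPart mu ∧ domLT mu lam) ∧
        ∀ ξ : Fin n → ℝ, p lam ξ = mSym lam ξ + ∑ᶠ mu, c mu * mSym mu ξ) ∧
    (∀ mu : Fin n → ℤ, IsPart mu → domLT mu lam →
      (∫ ξ in alcove n, p lam ξ * (starRingEnd ℂ) (mSym mu ξ) * (qwWeight q th ξ : ℂ)) = 0)

/-- padded access to the parts of `lam` (0-indexed); out-of-range values are never used. -/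
def getp {n : ℕ} (lam : Fin n → ℤ) (k : ℕ) : ℤ := if h : k < n then lam ⟨k, h⟩ else 0

/-- standard unit vector `e_j` in ℤⁿ. -/
def eVec {n : ℕ} (j : Fin n) : Fin n → ℤ := fun k => if k = j then 1 else 0

/-- coefficient `v_j^+(λ)` of the difference Toda Hamiltonian (0-indexed `j`). -/
def vplus {n : ℕ} (q t0 : ℝ) (t : Fin 4 → ℝ) (lam : Fin n → ℤ) (j : Fin n) : ℝ :=
  if (j : ℕ) = 0 then 1
  else if (j : ℕ) = n - 1 then
    (1 - q ^ (getp lam ((j : ℕ) - 1) - getp lam (j : ℕ))) *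
      (∏ r, (1 - t r * t0 * q ^ getp lam (j : ℕ))) /
      ((1 - t0 ^ 2 * q ^ (2 * getp lam (j : ℕ))) *
       (1 - t0 ^ 2 * q ^ (2 * getp lam (j : ℕ) + 1)))
  else 1 - q ^ (getp lam ((j : ℕ) - 1) - getp lam (j : ℕ))

/-- coefficient `v_j^-(λ)` of the difference Toda Hamiltonian (0-indexed `j`). -/
def vminus {n : ℕ} (q t0 : ℝ) (t : Fin 4 → ℝ) (lam : Fin n → ℤ) (j : Fin n) : ℝ :=
  if (j : ℕ) = n - 1 then
    (1 - t0 ^ 2 * q ^ (getp lam (n - 2) + getp lam (n - 1))) *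
      (∏ r, (1 - (t r)⁻¹ * t0 * q ^ getp lam (n - 1))) /
      ((1 - t0 ^ 2 * q ^ (2 * getp lam (n - 1))) *
       (1 - t0 ^ 2 * q ^ (2 * getp lam (n - 1) - 1)))
  else if (j : ℕ) = n - 2 then
    (1 - q ^ (getp lam (j : ℕ) - getp lam ((j : ℕ) + 1))) *
      (1 - t0 ^ 2 * q ^ (getp lam (n - 2) + getp lam (n - 1)))
  else 1 - q ^ (getp lam (j : ℕ) - getp lam ((j : ℕ) + 1))

/-- additive boundary potential `u(λ)` of Askey-Wilson type. -/
def upot {n : ℕ} (q t0 th0 : ℝ) (t : Fin 4 → ℝ) (lam : Fin n → ℤ) : ℝ :=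
  ∑ ε ∈ ({1, -1} : Finset ℝ),
    ((2 * th0)⁻¹ * ∏ r, (1 - ε * (Real.sqrt q)⁻¹ * t r)) *
      (1 - ε * t0 * q ^ getp lam (n - 2) * Real.sqrt q) /
      ((1 - ε * t0 * q ^ getp lam (n - 1) * (Real.sqrt q)⁻¹) *
       (1 - ε * t0⁻¹ * q ^ (-getp lam (n - 1)) * (Real.sqrt q)⁻¹))
/-- `τ_j = t^{n-j} t_0` (0-indexed `j`). -/
def tauMK {n : ℕ} (tt t0 : ℝ) (j : Fin n) : ℝ := tt ^ (n - 1 - (j : ℕ)) * t0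

/-- Macdonald-Koornwinder Pieri coefficient `V_j^+(λ;t)`. -/
def VP {n : ℕ} (q t0 th0 : ℝ) (t : Fin 4 → ℝ) (tt : ℝ) (lam : Fin n → ℤ) (j : Fin n) : ℝ :=
  (tt ^ (n - 1) * th0)⁻¹ *
    ((∏ r, (1 - t r * tauMK tt t0 j * q ^ getp lam (j : ℕ))) /
      ((1 - (tauMK tt t0 j) ^ 2 * q ^ (2 * getp lam (j : ℕ))) *
       (1 - (tauMK tt t0 j) ^ 2 * q ^ (2 * getp lam (j : ℕ) + 1)))) *
    ∏ k ∈ Finset.univ.erase j,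
      ((1 - tt * tauMK tt t0 j * tauMK tt t0 k * q ^ (getp lam (j : ℕ) + getp lam (k : ℕ))) *
       (1 - tt * tauMK tt t0 j * (tauMK tt t0 k)⁻¹ * q ^ (getp lam (j : ℕ) - getp lam (k : ℕ)))) /
      ((1 - tauMK tt t0 j * tauMK tt t0 k * q ^ (getp lam (j : ℕ) + getp lam (k : ℕ))) *
       (1 - tauMK tt t0 j * (tauMK tt t0 k)⁻¹ * q ^ (getp lam (j : ℕ) - getp lam (k : ℕ))))

/-- Macdonald-Koornwinder Pieri coefficient `V_j^-(λ;t)`. -/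
def VM {n : ℕ} (q t0 th0 : ℝ) (t : Fin 4 → ℝ) (tt : ℝ) (lam : Fin n → ℤ) (j : Fin n) : ℝ :=
  (tt ^ (n - 1) * th0) *
    ((∏ r, (1 - (t r)⁻¹ * tauMK tt t0 j * q ^ getp lam (j : ℕ))) /
      ((1 - (tauMK tt t0 j) ^ 2 * q ^ (2 * getp lam (j : ℕ))) *
       (1 - (tauMK tt t0 j) ^ 2 * q ^ (2 * getp lam (j : ℕ) - 1)))) *
    ∏ k ∈ Finset.univ.erase j,
      ((1 - tt⁻¹ * tauMK tt t0 j * tauMK tt t0 k * q ^ (getp lam (j : ℕ) + getp lam (k : ℕ))) *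
       (1 - tt⁻¹ * tauMK tt t0 j * (tauMK tt t0 k)⁻¹ * q ^ (getp lam (j : ℕ) - getp lam (k : ℕ)))) /
      ((1 - tauMK tt t0 j * tauMK tt t0 k * q ^ (getp lam (j : ℕ) + getp lam (k : ℕ))) *
       (1 - tauMK tt t0 j * (tauMK tt t0 k)⁻¹ * q ^ (getp lam (j : ℕ) - getp lam (k : ℕ))))


lemma ratioA (x c : ℝ) (hx : x ≠ 0) (m : ℕ) :
    (1 - x * (x ^ (m+1))⁻¹ * c) / (1 - (x ^ (m+1))⁻¹ * c)
      = x * ((x ^ m - c) / (x ^ (m+1) - c)) := by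
  rcases eq_or_ne (x ^ (m+1)) c with h | h
  · have hz : (1 : ℝ) - (x ^ (m+1))⁻¹ * c = 0 := by
      rw [← h, inv_mul_cancel₀ (pow_ne_zero _ hx), sub_self]
    rw [hz, div_zero, ← h, sub_self, div_zero, mul_zero]
  · have h2 : x ^ (m+1) - c ≠ 0 := sub_ne_zero.mpr h
    have h3 : 1 - (x ^ (m+1))⁻¹ * c ≠ 0 := by
      intro heq
      apply h
      have h4 : (x ^ (m+1))⁻¹ * c = 1 := by linarith [sub_eq_zero.mp heq]
      field_simp at h4
      exact h4.symm
    rw [mul_div_assoc', div_eq_div_iff h3 h2]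
    have e : (x ^ (m+1))⁻¹ * x ^ (m+1) = 1 := inv_mul_cancel₀ (pow_ne_zero _ hx)
    linear_combination (c - x * c) * e

lemma ratioB (x c : ℝ) (hx : x ≠ 0) (m : ℕ) :
    (1 - x⁻¹ * (x ^ (m+1))⁻¹ * c) / (1 - (x ^ (m+1))⁻¹ * c)
      = x⁻¹ * ((x ^ (m+1+1) - c) / (x ^ (m+1) - c)) := by
  rcases eq_or_ne (x ^ (m+1)) c with h | h
  · have hz : (1 : ℝ) - (x ^ (m+1))⁻¹ * c = 0 := by
      rw [← h, inv_mul_cancel₀ (pow_ne_zero _ hx), sub_self]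
    rw [hz, div_zero, ← h, sub_self, div_zero, mul_zero]
  · have h2 : x ^ (m+1) - c ≠ 0 := sub_ne_zero.mpr h
    have h3 : 1 - (x ^ (m+1))⁻¹ * c ≠ 0 := by
      intro heq
      apply h
      have h4 : (x ^ (m+1))⁻¹ * c = 1 := by linarith [sub_eq_zero.mp heq]
      field_simp at h4
      exact h4.symm
    rw [mul_div_assoc', div_eq_div_iff h3 h2]
    have e1 : (x ^ (m+1))⁻¹ * x ^ (m+1) = 1 := inv_mul_cancel₀ (pow_ne_zero _ hx)
    have e2 : x⁻¹ * x = 1 := inv_mul_cancel₀ hx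
    linear_combination (c - x⁻¹ * c) * e1 +
      (-(x ^ (m+1)) + x ^ (m+1) * (x ^ (m+1))⁻¹ * c) * e2

lemma hinvLT (x c : ℝ) (hx : x ≠ 0) (hc : c ≠ 0) (a m : ℕ) :
    (x ^ a * c) * (x ^ (a+m+1) * c)⁻¹ = (x ^ (m+1))⁻¹ := by
  rw [show a+m+1 = a+(m+1) by omega, pow_add]
  field_simp

lemma hinvGT (x c : ℝ) (hx : x ≠ 0) (hc : c ≠ 0) (b m : ℕ) :
    (x ^ (b+m+1) * c) * (x ^ b * c)⁻¹ = x ^ (m+1) := by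
  rw [show b+m+1 = b+(m+1) by omega, pow_add]
  field_simp

lemma plusLT (x c S D : ℝ) (hx : x ≠ 0) (hc : c ≠ 0) (a m : ℕ) :
    (1 - x * (x ^ a * c) * (x ^ (a+m+1) * c) * S) *
      (1 - x * (x ^ a * c) * (x ^ (a+m+1) * c)⁻¹ * D) /
    ((1 - (x ^ a * c) * (x ^ (a+m+1) * c) * S) *
      (1 - (x ^ a * c) * (x ^ (a+m+1) * c)⁻¹ * D))
    = x * ((1 - x ^ (a+(a+m+1)+1) * (c ^ 2 * S)) / (1 - x ^ (a+(a+m+1)) * (c ^ 2 * S)) *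
        ((x ^ m - D) / (x ^ (m+1) - D))) := by
  have hinv := hinvLT x c hx hc a m
  have h1 : 1 - x * (x ^ a * c) * (x ^ (a+m+1) * c) * S
      = 1 - x ^ (a+(a+m+1)+1) * (c ^ 2 * S) := by ring
  have h2 : 1 - (x ^ a * c) * (x ^ (a+m+1) * c) * S
      = 1 - x ^ (a+(a+m+1)) * (c ^ 2 * S) := by ring
  have h3 : 1 - x * (x ^ a * c) * (x ^ (a+m+1) * c)⁻¹ * D
      = 1 - x * (x ^ (m+1))⁻¹ * D := by linear_combination (-(x*D)) * hinv
  have h4 : 1 - (x ^ a * c) * (x ^ (a+m+1) * c)⁻¹ * D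
      = 1 - (x ^ (m+1))⁻¹ * D := by linear_combination (-D) * hinv
  rw [mul_div_mul_comm, h1, h2, h3, h4, ratioA x D hx m]
  ring

lemma plusGT (x c S D : ℝ) (hx : x ≠ 0) (hc : c ≠ 0) (b m : ℕ) :
    (1 - x * (x ^ (b+m+1) * c) * (x ^ b * c) * S) *
      (1 - x * (x ^ (b+m+1) * c) * (x ^ b * c)⁻¹ * D) /
    ((1 - (x ^ (b+m+1) * c) * (x ^ b * c) * S) *
      (1 - (x ^ (b+m+1) * c) * (x ^ b * c)⁻¹ * D))
    = (1 - x ^ ((b+m+1)+b+1) * (c ^ 2 * S)) / (1 - x ^ ((b+m+1)+b) * (c ^ 2 * S)) *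
        ((1 - x ^ (m+1+1) * D) / (1 - x ^ (m+1) * D)) := by
  have hinv := hinvGT x c hx hc b m
  have h1 : 1 - x * (x ^ (b+m+1) * c) * (x ^ b * c) * S
      = 1 - x ^ ((b+m+1)+b+1) * (c ^ 2 * S) := by ring
  have h2 : 1 - (x ^ (b+m+1) * c) * (x ^ b * c) * S
      = 1 - x ^ ((b+m+1)+b) * (c ^ 2 * S) := by ring
  have h3 : 1 - x * (x ^ (b+m+1) * c) * (x ^ b * c)⁻¹ * D
      = 1 - x ^ (m+1+1) * D := by linear_combination (-(x*D)) * hinv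
  have h4 : 1 - (x ^ (b+m+1) * c) * (x ^ b * c)⁻¹ * D
      = 1 - x ^ (m+1) * D := by linear_combination (-D) * hinv
  rw [mul_div_mul_comm, h1, h2, h3, h4]

lemma minusGT (x c S D : ℝ) (hx : x ≠ 0) (hc : c ≠ 0) (b m : ℕ) :
    (1 - x⁻¹ * (x ^ (b+m+1) * c) * (x ^ b * c) * S) *
      (1 - x⁻¹ * (x ^ (b+m+1) * c) * (x ^ b * c)⁻¹ * D) /
    ((1 - (x ^ (b+m+1) * c) * (x ^ b * c) * S) *
      (1 - (x ^ (b+m+1) * c) * (x ^ b * c)⁻¹ * D))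
    = (1 - x ^ ((b+m+1)+b-1) * (c ^ 2 * S)) / (1 - x ^ ((b+m+1)+b) * (c ^ 2 * S)) *
        ((1 - x ^ m * D) / (1 - x ^ (m+1) * D)) := by
  have hinv := hinvGT x c hx hc b m
  have e2 : x⁻¹ * x = 1 := inv_mul_cancel₀ hx
  rw [show (b+m+1)+b-1 = b+m+b by omega]
  have h1 : 1 - x⁻¹ * (x ^ (b+m+1) * c) * (x ^ b * c) * S
      = 1 - x ^ (b+m+b) * (c ^ 2 * S) := by
    linear_combination (-(x ^ (b+m+b) * (c ^ 2 * S))) * e2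
  have h3 : 1 - x⁻¹ * (x ^ (b+m+1) * c) * (x ^ b * c)⁻¹ * D
      = 1 - x ^ m * D := by
    linear_combination (-(x⁻¹ * D)) * hinv + (-(x ^ m * D)) * e2
  have h2 : 1 - (x ^ (b+m+1) * c) * (x ^ b * c) * S
      = 1 - x ^ ((b+m+1)+b) * (c ^ 2 * S) := by ring
  have h4 : 1 - (x ^ (b+m+1) * c) * (x ^ b * c)⁻¹ * D
      = 1 - x ^ (m+1) * D := by linear_combination (-D) * hinv
  rw [mul_div_mul_comm, h1, h2, h3, h4]

lemma minusLT (x c S D : ℝ) (hx : x ≠ 0) (hc : c ≠ 0) (a m : ℕ) :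
    (1 - x⁻¹ * (x ^ a * c) * (x ^ (a+m+1) * c) * S) *
      (1 - x⁻¹ * (x ^ a * c) * (x ^ (a+m+1) * c)⁻¹ * D) /
    ((1 - (x ^ a * c) * (x ^ (a+m+1) * c) * S) *
      (1 - (x ^ a * c) * (x ^ (a+m+1) * c)⁻¹ * D))
    = x⁻¹ * ((1 - x ^ (a+(a+m+1)-1) * (c ^ 2 * S)) / (1 - x ^ (a+(a+m+1)) * (c ^ 2 * S)) *
        ((x ^ (m+1+1) - D) / (x ^ (m+1) - D))) := by
  have hinv := hinvLT x c hx hc a m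
  have e2 : x⁻¹ * x = 1 := inv_mul_cancel₀ hx
  rw [show a+(a+m+1)-1 = a+a+m by omega]
  have h1 : 1 - x⁻¹ * (x ^ a * c) * (x ^ (a+m+1) * c) * S
      = 1 - x ^ (a+a+m) * (c ^ 2 * S) := by
    linear_combination (-(x ^ (a+a+m) * (c ^ 2 * S))) * e2
  have h2 : 1 - (x ^ a * c) * (x ^ (a+m+1) * c) * S
      = 1 - x ^ (a+(a+m+1)) * (c ^ 2 * S) := by ring
  have h3 : 1 - x⁻¹ * (x ^ a * c) * (x ^ (a+m+1) * c)⁻¹ * D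
      = 1 - x⁻¹ * (x ^ (m+1))⁻¹ * D := by linear_combination (-(x⁻¹ * D)) * hinv
  have h4 : 1 - (x ^ a * c) * (x ^ (a+m+1) * c)⁻¹ * D
      = 1 - (x ^ (m+1))⁻¹ * D := by linear_combination (-D) * hinv
  rw [mul_div_mul_comm, h1, h2, h3, h4, ratioB x D hx m]
  ring

lemma rearrP (u v s M P : ℝ) (h : u * v⁻¹ * s = 1) :
    M * P = u * (v⁻¹ * M * (s * P)) := by
  calc M * P = (u * v⁻¹ * s) * (M * P) := by rw [h]; ring
    _ = u * (v⁻¹ * M * (s * P)) := by ring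

lemma rearrM (u v w M P : ℝ) (h : u⁻¹ * v * w = 1) :
    M * P = u⁻¹ * (v * M * (w * P)) := by
  calc M * P = (u⁻¹ * v * w) * (M * P) := by rw [h]; ring
    _ = u⁻¹ * (v * M * (w * P)) := by ring

lemma cardlt {n : ℕ} (j : Fin n) :
    ((Finset.univ.erase j).filter (fun k => k < j)).card = (j : ℕ) := by
  have h : (Finset.univ.erase j).filter (fun k => k < j) = Finset.Iio j := by
    ext k
    simp only [Finset.mem_filter, Finset.mem_erase, Finset.mem_univ, true_and, and_true,
      Finset.mem_Iio]
    exact ⟨fun h => h.2, fun h => ⟨ne_of_lt h, h⟩⟩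
  rw [h, Fin.card_Iio]

lemma prod_ite_lt {n : ℕ} (j : Fin n) (tt : ℝ) :
    (∏ k ∈ Finset.univ.erase j, (if k < j then tt else (1:ℝ))) = tt ^ (j : ℕ) := by
  rw [Finset.prod_ite, Finset.prod_const, Finset.prod_const_one, mul_one, cardlt]

lemma tendsT1 (c : ℝ) (p : ℕ) :
    Tendsto (fun x : ℝ => 1 - x ^ p * c) (nhdsWithin 0 (Set.Ioi 0))
      (nhds (1 - 0 ^ p * c)) := by
  exact ((continuous_const.sub ((continuous_pow p).mul continuous_const)).tendsto 0).mono_left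
    nhdsWithin_le_nhds

lemma tendsT2 (c : ℝ) (p : ℕ) :
    Tendsto (fun x : ℝ => x ^ p - c) (nhdsWithin 0 (Set.Ioi 0))
      (nhds (0 ^ p - c)) := by
  exact (((continuous_pow p).sub continuous_const).tendsto 0).mono_left nhdsWithin_le_nhds
/-- limit form of the plus cross factor -/
def HpF {n : ℕ} (q t0 : ℝ) (lam : Fin n → ℤ) (j k : Fin n) (tt : ℝ) : ℝ :=
  (1 - tt ^ ((n-1-(j:ℕ)) + (n-1-(k:ℕ)) + 1) *
      (t0 ^ 2 * q ^ (getp lam (j:ℕ) + getp lam (k:ℕ)))) /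
  (1 - tt ^ ((n-1-(j:ℕ)) + (n-1-(k:ℕ))) *
      (t0 ^ 2 * q ^ (getp lam (j:ℕ) + getp lam (k:ℕ)))) *
  (if k < j then
     (tt ^ ((j:ℕ)-(k:ℕ)-1) - q ^ (getp lam (j:ℕ) - getp lam (k:ℕ))) /
     (tt ^ ((j:ℕ)-(k:ℕ)) - q ^ (getp lam (j:ℕ) - getp lam (k:ℕ)))
   else
     (1 - tt ^ ((k:ℕ)-(j:ℕ)+1) * q ^ (getp lam (j:ℕ) - getp lam (k:ℕ))) /
     (1 - tt ^ ((k:ℕ)-(j:ℕ)) * q ^ (getp lam (j:ℕ) - getp lam (k:ℕ))))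

/-- limit form of the minus cross factor -/
def HmF {n : ℕ} (q t0 : ℝ) (lam : Fin n → ℤ) (j k : Fin n) (tt : ℝ) : ℝ :=
  (1 - tt ^ ((n-1-(j:ℕ)) + (n-1-(k:ℕ)) - 1) *
      (t0 ^ 2 * q ^ (getp lam (j:ℕ) + getp lam (k:ℕ)))) /
  (1 - tt ^ ((n-1-(j:ℕ)) + (n-1-(k:ℕ))) *
      (t0 ^ 2 * q ^ (getp lam (j:ℕ) + getp lam (k:ℕ)))) *
  (if k < j then
     (tt ^ ((j:ℕ)-(k:ℕ)+1) - q ^ (getp lam (j:ℕ) - getp lam (k:ℕ))) /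
     (tt ^ ((j:ℕ)-(k:ℕ)) - q ^ (getp lam (j:ℕ) - getp lam (k:ℕ)))
   else
     (1 - tt ^ ((k:ℕ)-(j:ℕ)-1) * q ^ (getp lam (j:ℕ) - getp lam (k:ℕ))) /
     (1 - tt ^ ((k:ℕ)-(j:ℕ)) * q ^ (getp lam (j:ℕ) - getp lam (k:ℕ))))
lemma HpF_eq {n : ℕ} (q t0 : ℝ) (ht0 : t0 ≠ 0) (lam : Fin n → ℤ) (j k : Fin n)
    (hk : k ≠ j) (tt : ℝ) (htt : tt ≠ 0) :
    (1 - tt * tauMK tt t0 j * tauMK tt t0 k * q ^ (getp lam (j : ℕ) + getp lam (k : ℕ))) *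
      (1 - tt * tauMK tt t0 j * (tauMK tt t0 k)⁻¹ *
        q ^ (getp lam (j : ℕ) - getp lam (k : ℕ))) /
    ((1 - tauMK tt t0 j * tauMK tt t0 k * q ^ (getp lam (j : ℕ) + getp lam (k : ℕ))) *
      (1 - tauMK tt t0 j * (tauMK tt t0 k)⁻¹ *
        q ^ (getp lam (j : ℕ) - getp lam (k : ℕ))))
    = (if k < j then tt else 1) * HpF q t0 lam j k tt := by
  have hj := j.isLt
  have hk' := k.isLt
  rcases lt_or_gt_of_ne hk with hlt | hgt
  · have hkj : (k:ℕ) < (j:ℕ) := hlt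
    rw [if_pos hlt]
    unfold HpF
    rw [if_pos hlt]
    obtain ⟨m, hm⟩ : ∃ m, (j:ℕ) - (k:ℕ) = m + 1 := ⟨(j:ℕ)-(k:ℕ)-1, by omega⟩
    simp only [tauMK]
    rw [hm, Nat.add_sub_cancel, show n - 1 - (k:ℕ) = (n - 1 - (j:ℕ)) + m + 1 by omega]
    exact plusLT tt t0 _ _ htt ht0 (n-1-(j:ℕ)) m
  · have hkj : (j:ℕ) < (k:ℕ) := hgt
    rw [if_neg (not_lt_of_gt hgt), one_mul]
    unfold HpF
    rw [if_neg (not_lt_of_gt hgt)]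
    obtain ⟨m, hm⟩ : ∃ m, (k:ℕ) - (j:ℕ) = m + 1 := ⟨(k:ℕ)-(j:ℕ)-1, by omega⟩
    simp only [tauMK]
    rw [hm, show n - 1 - (j:ℕ) = (n - 1 - (k:ℕ)) + m + 1 by omega]
    exact plusGT tt t0 _ _ htt ht0 (n-1-(k:ℕ)) m

lemma HmF_eq {n : ℕ} (q t0 : ℝ) (ht0 : t0 ≠ 0) (lam : Fin n → ℤ) (j k : Fin n)
    (hk : k ≠ j) (tt : ℝ) (htt : tt ≠ 0) :
    (1 - tt⁻¹ * tauMK tt t0 j * tauMK tt t0 k * q ^ (getp lam (j : ℕ) + getp lam (k : ℕ))) *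
      (1 - tt⁻¹ * tauMK tt t0 j * (tauMK tt t0 k)⁻¹ *
        q ^ (getp lam (j : ℕ) - getp lam (k : ℕ))) /
    ((1 - tauMK tt t0 j * tauMK tt t0 k * q ^ (getp lam (j : ℕ) + getp lam (k : ℕ))) *
      (1 - tauMK tt t0 j * (tauMK tt t0 k)⁻¹ *
        q ^ (getp lam (j : ℕ) - getp lam (k : ℕ))))
    = (if k < j then tt⁻¹ else 1) * HmF q t0 lam j k tt := by
  have hj := j.isLt
  have hk' := k.isLt
  rcases lt_or_gt_of_ne hk with hlt | hgt
  · have hkj : (k:ℕ) < (j:ℕ) := hlt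
    rw [if_pos hlt]
    unfold HmF
    rw [if_pos hlt]
    obtain ⟨m, hm⟩ : ∃ m, (j:ℕ) - (k:ℕ) = m + 1 := ⟨(j:ℕ)-(k:ℕ)-1, by omega⟩
    simp only [tauMK]
    rw [hm, show n - 1 - (k:ℕ) = (n - 1 - (j:ℕ)) + m + 1 by omega]
    exact minusLT tt t0 _ _ htt ht0 (n-1-(j:ℕ)) m
  · have hkj : (j:ℕ) < (k:ℕ) := hgt
    rw [if_neg (not_lt_of_gt hgt), one_mul]
    unfold HmF
    rw [if_neg (not_lt_of_gt hgt)]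
    obtain ⟨m, hm⟩ : ∃ m, (k:ℕ) - (j:ℕ) = m + 1 := ⟨(k:ℕ)-(j:ℕ)-1, by omega⟩
    simp only [tauMK]
    rw [hm, Nat.add_sub_cancel, show n - 1 - (j:ℕ) = (n - 1 - (k:ℕ)) + m + 1 by omega]
    exact minusGT tt t0 _ _ htt ht0 (n-1-(k:ℕ)) m

lemma HpF_tendsto {n : ℕ} (q t0 : ℝ) (hq0 : 0 < q) (lam : Fin n → ℤ) (j k : Fin n)
    (hk : k ≠ j) :
    Tendsto (HpF q t0 lam j k) (nhdsWithin 0 (Set.Ioi 0))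
      (nhds (if (k:ℕ) + 1 = (j:ℕ)
        then 1 - q ^ (getp lam ((j:ℕ)-1) - getp lam (j:ℕ)) else 1)) := by
  have hj := j.isLt
  have hk2 := k.isLt
  have hkj : (k:ℕ) ≠ (j:ℕ) := fun h => hk (Fin.ext h)
  have hA : (n-1-(j:ℕ)) + (n-1-(k:ℕ)) ≠ 0 := by omega
  have hDq : q ^ (getp lam (j:ℕ) - getp lam (k:ℕ)) ≠ 0 := zpow_ne_zero _ (ne_of_gt hq0)
  have hb : (1:ℝ) - (0:ℝ) ^ ((n-1-(j:ℕ)) + (n-1-(k:ℕ))) *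
      (t0 ^ 2 * q ^ (getp lam (j:ℕ) + getp lam (k:ℕ))) ≠ 0 := by
    rw [zero_pow hA]; norm_num
  unfold HpF
  rcases lt_or_gt_of_ne hk with hlt | hgt
  · have hkjlt : (k:ℕ) < (j:ℕ) := hlt
    simp only [if_pos hlt]
    have hb2 : (0:ℝ) ^ ((j:ℕ)-(k:ℕ)) - q ^ (getp lam (j:ℕ) - getp lam (k:ℕ)) ≠ 0 := by
      rw [zero_pow (by omega : (j:ℕ)-(k:ℕ) ≠ 0)]
      simpa using hDq
    have T := ((tendsT1 (t0 ^ 2 * q ^ (getp lam (j:ℕ) + getp lam (k:ℕ)))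
          ((n-1-(j:ℕ)) + (n-1-(k:ℕ)) + 1)).div
        (tendsT1 _ ((n-1-(j:ℕ)) + (n-1-(k:ℕ)))) hb).mul
      ((tendsT2 (q ^ (getp lam (j:ℕ) - getp lam (k:ℕ))) ((j:ℕ)-(k:ℕ)-1)).div
        (tendsT2 _ ((j:ℕ)-(k:ℕ))) hb2)
    have hval : (1 - (0:ℝ) ^ ((n-1-(j:ℕ)) + (n-1-(k:ℕ)) + 1) *
          (t0 ^ 2 * q ^ (getp lam (j:ℕ) + getp lam (k:ℕ)))) /
        (1 - (0:ℝ) ^ ((n-1-(j:ℕ)) + (n-1-(k:ℕ))) *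
          (t0 ^ 2 * q ^ (getp lam (j:ℕ) + getp lam (k:ℕ)))) *
        (((0:ℝ) ^ ((j:ℕ)-(k:ℕ)-1) - q ^ (getp lam (j:ℕ) - getp lam (k:ℕ))) /
          ((0:ℝ) ^ ((j:ℕ)-(k:ℕ)) - q ^ (getp lam (j:ℕ) - getp lam (k:ℕ))))
        = (if (k:ℕ) + 1 = (j:ℕ)
            then 1 - q ^ (getp lam ((j:ℕ)-1) - getp lam (j:ℕ)) else 1) := by
      rw [zero_pow hA, zero_pow (by omega : (n-1-(j:ℕ)) + (n-1-(k:ℕ)) + 1 ≠ 0),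
        zero_pow (by omega : (j:ℕ)-(k:ℕ) ≠ 0)]
      by_cases hc : (k:ℕ) + 1 = (j:ℕ)
      · rw [if_pos hc, show (j:ℕ)-(k:ℕ)-1 = 0 by omega, pow_zero,
          show (j:ℕ)-1 = (k:ℕ) by omega]
        have hinv : q ^ (getp lam (k:ℕ) - getp lam (j:ℕ))
            = (q ^ (getp lam (j:ℕ) - getp lam (k:ℕ)))⁻¹ := by
          rw [← zpow_neg]; congr 1; ring
        rw [hinv]
        have h0 : (1:ℝ) - 0 * (t0 ^ 2 * q ^ (getp lam (j:ℕ) + getp lam (k:ℕ))) = 1 := by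
          ring
        have hneg : (0:ℝ) - q ^ (getp lam (j:ℕ) - getp lam (k:ℕ)) ≠ 0 := by
          simpa using hDq
        rw [h0, div_self one_ne_zero, one_mul, div_eq_iff hneg]
        have e := inv_mul_cancel₀ hDq
        linear_combination (-1 : ℝ) * e
      · rw [if_neg hc, zero_pow (by omega : (j:ℕ)-(k:ℕ)-1 ≠ 0)]
        have h0 : (1:ℝ) - 0 * (t0 ^ 2 * q ^ (getp lam (j:ℕ) + getp lam (k:ℕ))) = 1 := by
          ring
        have hneg : (0:ℝ) - q ^ (getp lam (j:ℕ) - getp lam (k:ℕ)) ≠ 0 := by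
          simpa using hDq
        rw [h0, div_self one_ne_zero, one_mul, div_self hneg]
    rw [hval] at T
    exact T
  · have hkjgt : (j:ℕ) < (k:ℕ) := hgt
    simp only [if_neg (not_lt_of_gt hgt), if_neg (by omega : ¬ ((k:ℕ) + 1 = (j:ℕ)))]
    have hb2 : (1:ℝ) - (0:ℝ) ^ ((k:ℕ)-(j:ℕ)) *
        q ^ (getp lam (j:ℕ) - getp lam (k:ℕ)) ≠ 0 := by
      rw [zero_pow (by omega : (k:ℕ)-(j:ℕ) ≠ 0)]; norm_num
    have T := ((tendsT1 (t0 ^ 2 * q ^ (getp lam (j:ℕ) + getp lam (k:ℕ)))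
          ((n-1-(j:ℕ)) + (n-1-(k:ℕ)) + 1)).div
        (tendsT1 _ ((n-1-(j:ℕ)) + (n-1-(k:ℕ)))) hb).mul
      ((tendsT1 (q ^ (getp lam (j:ℕ) - getp lam (k:ℕ))) ((k:ℕ)-(j:ℕ)+1)).div
        (tendsT1 _ ((k:ℕ)-(j:ℕ))) hb2)
    have hval : (1 - (0:ℝ) ^ ((n-1-(j:ℕ)) + (n-1-(k:ℕ)) + 1) *
          (t0 ^ 2 * q ^ (getp lam (j:ℕ) + getp lam (k:ℕ)))) /
        (1 - (0:ℝ) ^ ((n-1-(j:ℕ)) + (n-1-(k:ℕ))) *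
          (t0 ^ 2 * q ^ (getp lam (j:ℕ) + getp lam (k:ℕ)))) *
        ((1 - (0:ℝ) ^ ((k:ℕ)-(j:ℕ)+1) * q ^ (getp lam (j:ℕ) - getp lam (k:ℕ))) /
          (1 - (0:ℝ) ^ ((k:ℕ)-(j:ℕ)) * q ^ (getp lam (j:ℕ) - getp lam (k:ℕ))))
        = (1:ℝ) := by
      rw [zero_pow hA, zero_pow (by omega : (n-1-(j:ℕ)) + (n-1-(k:ℕ)) + 1 ≠ 0),
        zero_pow (by omega : (k:ℕ)-(j:ℕ) ≠ 0), zero_pow (by omega : (k:ℕ)-(j:ℕ)+1 ≠ 0)]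
      norm_num
    rw [hval] at T
    exact T

lemma HmF_tendsto {n : ℕ} (q t0 : ℝ) (hq0 : 0 < q) (lam : Fin n → ℤ) (j k : Fin n)
    (hk : k ≠ j) :
    Tendsto (HmF q t0 lam j k) (nhdsWithin 0 (Set.Ioi 0))
      (nhds ((if (k:ℕ) = (j:ℕ) + 1
          then 1 - q ^ (getp lam (j:ℕ) - getp lam ((j:ℕ)+1)) else 1) *
        (if (j:ℕ) + (k:ℕ) = 2*n - 3
          then 1 - t0 ^ 2 * q ^ (getp lam (n-2) + getp lam (n-1)) else 1))) := by
  have hj := j.isLt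
  have hk2 := k.isLt
  have hkj : (k:ℕ) ≠ (j:ℕ) := fun h => hk (Fin.ext h)
  have hA : (n-1-(j:ℕ)) + (n-1-(k:ℕ)) ≠ 0 := by omega
  have hDq : q ^ (getp lam (j:ℕ) - getp lam (k:ℕ)) ≠ 0 := zpow_ne_zero _ (ne_of_gt hq0)
  have hb : (1:ℝ) - (0:ℝ) ^ ((n-1-(j:ℕ)) + (n-1-(k:ℕ))) *
      (t0 ^ 2 * q ^ (getp lam (j:ℕ) + getp lam (k:ℕ))) ≠ 0 := by
    rw [zero_pow hA]; norm_num
  unfold HmF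
  rcases lt_or_gt_of_ne hk with hlt | hgt
  · have hkjlt : (k:ℕ) < (j:ℕ) := hlt
    simp only [if_pos hlt]
    have hb2 : (0:ℝ) ^ ((j:ℕ)-(k:ℕ)) - q ^ (getp lam (j:ℕ) - getp lam (k:ℕ)) ≠ 0 := by
      rw [zero_pow (by omega : (j:ℕ)-(k:ℕ) ≠ 0)]
      simpa using hDq
    have T := ((tendsT1 (t0 ^ 2 * q ^ (getp lam (j:ℕ) + getp lam (k:ℕ)))
          ((n-1-(j:ℕ)) + (n-1-(k:ℕ)) - 1)).div
        (tendsT1 _ ((n-1-(j:ℕ)) + (n-1-(k:ℕ)))) hb).mul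
      ((tendsT2 (q ^ (getp lam (j:ℕ) - getp lam (k:ℕ))) ((j:ℕ)-(k:ℕ)+1)).div
        (tendsT2 _ ((j:ℕ)-(k:ℕ))) hb2)
    have hval : (1 - (0:ℝ) ^ ((n-1-(j:ℕ)) + (n-1-(k:ℕ)) - 1) *
          (t0 ^ 2 * q ^ (getp lam (j:ℕ) + getp lam (k:ℕ)))) /
        (1 - (0:ℝ) ^ ((n-1-(j:ℕ)) + (n-1-(k:ℕ))) *
          (t0 ^ 2 * q ^ (getp lam (j:ℕ) + getp lam (k:ℕ)))) *
        (((0:ℝ) ^ ((j:ℕ)-(k:ℕ)+1) - q ^ (getp lam (j:ℕ) - getp lam (k:ℕ))) /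
          ((0:ℝ) ^ ((j:ℕ)-(k:ℕ)) - q ^ (getp lam (j:ℕ) - getp lam (k:ℕ))))
        = ((if (k:ℕ) = (j:ℕ) + 1
            then 1 - q ^ (getp lam (j:ℕ) - getp lam ((j:ℕ)+1)) else 1) *
          (if (j:ℕ) + (k:ℕ) = 2*n - 3
            then 1 - t0 ^ 2 * q ^ (getp lam (n-2) + getp lam (n-1)) else 1)) := by
      rw [zero_pow hA, zero_pow (by omega : (j:ℕ)-(k:ℕ) ≠ 0),
        zero_pow (by omega : (j:ℕ)-(k:ℕ)+1 ≠ 0),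
        show (1:ℝ) - 0 * (t0 ^ 2 * q ^ (getp lam (j:ℕ) + getp lam (k:ℕ))) = 1 by ring,
        div_one, if_neg (by omega : ¬ ((k:ℕ) = (j:ℕ) + 1)), one_mul,
        div_self (by simpa using hDq), mul_one]
      by_cases hA1 : (n-1-(j:ℕ)) + (n-1-(k:ℕ)) = 1
      · rw [if_pos (by omega), show (n-1-(j:ℕ)) + (n-1-(k:ℕ)) - 1 = 0 by omega, pow_zero,
          one_mul, show (j:ℕ) = n-1 by omega, show (k:ℕ) = n-2 by omega,
          add_comm (getp lam (n-1))]
      · rw [if_neg (by omega),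
          zero_pow (by omega : (n-1-(j:ℕ)) + (n-1-(k:ℕ)) - 1 ≠ 0)]
        ring
    rw [hval] at T
    exact T
  · have hkjgt : (j:ℕ) < (k:ℕ) := hgt
    simp only [if_neg (not_lt_of_gt hgt)]
    have hb2 : (1:ℝ) - (0:ℝ) ^ ((k:ℕ)-(j:ℕ)) *
        q ^ (getp lam (j:ℕ) - getp lam (k:ℕ)) ≠ 0 := by
      rw [zero_pow (by omega : (k:ℕ)-(j:ℕ) ≠ 0)]; norm_num
    have T := ((tendsT1 (t0 ^ 2 * q ^ (getp lam (j:ℕ) + getp lam (k:ℕ)))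
          ((n-1-(j:ℕ)) + (n-1-(k:ℕ)) - 1)).div
        (tendsT1 _ ((n-1-(j:ℕ)) + (n-1-(k:ℕ)))) hb).mul
      ((tendsT1 (q ^ (getp lam (j:ℕ) - getp lam (k:ℕ))) ((k:ℕ)-(j:ℕ)-1)).div
        (tendsT1 _ ((k:ℕ)-(j:ℕ))) hb2)
    have hval : (1 - (0:ℝ) ^ ((n-1-(j:ℕ)) + (n-1-(k:ℕ)) - 1) *
          (t0 ^ 2 * q ^ (getp lam (j:ℕ) + getp lam (k:ℕ)))) /
        (1 - (0:ℝ) ^ ((n-1-(j:ℕ)) + (n-1-(k:ℕ))) *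
          (t0 ^ 2 * q ^ (getp lam (j:ℕ) + getp lam (k:ℕ)))) *
        ((1 - (0:ℝ) ^ ((k:ℕ)-(j:ℕ)-1) * q ^ (getp lam (j:ℕ) - getp lam (k:ℕ))) /
          (1 - (0:ℝ) ^ ((k:ℕ)-(j:ℕ)) * q ^ (getp lam (j:ℕ) - getp lam (k:ℕ))))
        = ((if (k:ℕ) = (j:ℕ) + 1
            then 1 - q ^ (getp lam (j:ℕ) - getp lam ((j:ℕ)+1)) else 1) *
          (if (j:ℕ) + (k:ℕ) = 2*n - 3
            then 1 - t0 ^ 2 * q ^ (getp lam (n-2) + getp lam (n-1)) else 1)) := by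
      rw [zero_pow hA, zero_pow (by omega : (k:ℕ)-(j:ℕ) ≠ 0),
        show (1:ℝ) - 0 * (t0 ^ 2 * q ^ (getp lam (j:ℕ) + getp lam (k:ℕ))) = 1 by ring,
        show (1:ℝ) - 0 * q ^ (getp lam (j:ℕ) - getp lam (k:ℕ)) = 1 by ring,
        div_one, div_one]
      have hsecond : (1:ℝ) - (0:ℝ) ^ ((k:ℕ)-(j:ℕ)-1) * q ^ (getp lam (j:ℕ) - getp lam (k:ℕ))
          = (if (k:ℕ) = (j:ℕ) + 1
              then 1 - q ^ (getp lam (j:ℕ) - getp lam ((j:ℕ)+1)) else 1) := by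
        by_cases hc : (k:ℕ) = (j:ℕ) + 1
        · rw [if_pos hc, show (k:ℕ)-(j:ℕ)-1 = 0 by omega, pow_zero, one_mul,
            show (j:ℕ)+1 = (k:ℕ) by omega]
        · rw [if_neg hc, zero_pow (by omega : (k:ℕ)-(j:ℕ)-1 ≠ 0)]
          ring
      have hfirst : (1:ℝ) - (0:ℝ) ^ ((n-1-(j:ℕ)) + (n-1-(k:ℕ)) - 1) *
            (t0 ^ 2 * q ^ (getp lam (j:ℕ) + getp lam (k:ℕ)))
          = (if (j:ℕ) + (k:ℕ) = 2*n - 3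
              then 1 - t0 ^ 2 * q ^ (getp lam (n-2) + getp lam (n-1)) else 1) := by
        by_cases hA1 : (n-1-(j:ℕ)) + (n-1-(k:ℕ)) = 1
        · rw [if_pos (by omega), show (n-1-(j:ℕ)) + (n-1-(k:ℕ)) - 1 = 0 by omega, pow_zero,
            one_mul, show (j:ℕ) = n-2 by omega, show (k:ℕ) = n-1 by omega]
        · rw [if_neg (by omega),
            zero_pow (by omega : (n-1-(j:ℕ)) + (n-1-(k:ℕ)) - 1 ≠ 0)]
          ring
      rw [hfirst, hsecond, mul_comm]
    rw [hval] at T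
    exact T

/-- `t → 0` limits of the Macdonald-Koornwinder Pieri coefficients:
`τ̂_j V_j^+(λ;t) → v_j^+(λ)` and `τ̂_j⁻¹ V_j^-(λ;t) → v_j^-(λ)`. -/
theorem stmt4 {n : ℕ} (hn : 2 ≤ n) (q : ℝ) (hq : q ∈ Set.Ioo (0 : ℝ) 1)
    (th : Fin 4 → ℝ) (hth : ∀ r, th r ∈ Set.Ioo (-1 : ℝ) 1 ∧ th r ≠ 0)
    (hth0 : 0 < th 0) (hthprod : 0 < th 0 * th 1 * th 2 * th 3)
    (t0 : ℝ) (ht0 : t0 = Real.sqrt (q⁻¹ * (th 0 * th 1 * th 2 * th 3)))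
    (t : Fin 4 → ℝ) (ht : t 0 = t0 ∧ ∀ r : Fin 4, r ≠ 0 → t r = th 0 * th r / t0)
    (ht0ne : t0 ≠ 1)
    (lam : Fin n → ℤ) (hlam : IsPart lam) (j : Fin n) :
    (IsPart (lam + eVec j) →
      Filter.Tendsto (fun tt : ℝ => (tt ^ (n - 1 - (j : ℕ)) * th 0) * VP q t0 (th 0) t tt lam j)
        (nhdsWithin 0 (Set.Ioi 0)) (nhds (vplus q t0 t lam j))) ∧
    (IsPart (lam - eVec j) →
      Filter.Tendsto (fun tt : ℝ => (tt ^ (n - 1 - (j : ℕ)) * th 0)⁻¹ * VM q t0 (th 0) t tt lam j)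
        (nhdsWithin 0 (Set.Ioi 0)) (nhds (vminus q t0 t lam j))) := by
  obtain ⟨hq0, hq1⟩ := hq
  have hqne : q ≠ 0 := ne_of_gt hq0
  have ht0pos : 0 < t0 := by
    rw [ht0]; apply Real.sqrt_pos.mpr; positivity
  have ht0ne0 : t0 ≠ 0 := ne_of_gt ht0pos
  have hth0ne : th 0 ≠ 0 := ne_of_gt hth0
  have ht0sq : t0 ^ 2 = q⁻¹ * (th 0 * th 1 * th 2 * th 3) := by
    rw [ht0, Real.sq_sqrt (by positivity)]
  have habs : ∀ r, |th r| < 1 := fun r => abs_lt.mpr ⟨(hth r).1.1, (hth r).1.2⟩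
  have hmul : ∀ x y : ℝ, |x| < 1 → |y| < 1 → |x*y| < 1 := by
    intro x y hx hy
    rw [abs_mul]
    nlinarith [abs_nonneg x, abs_nonneg y]
  have hPlt1 : th 0 * th 1 * th 2 * th 3 < 1 := by
    have h4 : |th 0 * th 1 * th 2 * th 3| < 1 :=
      hmul _ _ (hmul _ _ (hmul _ _ (habs 0) (habs 1)) (habs 2)) (habs 3)
    calc th 0*th 1*th 2*th 3 ≤ |th 0*th 1*th 2*th 3| := le_abs_self _
      _ < 1 := h4
  have ht0q : t0 ^ 2 * q = th 0 * th 1 * th 2 * th 3 := by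
    rw [ht0sq]; field_simp
  have hlt1 : ∀ e : ℕ, 1 ≤ e → t0 ^ 2 * q ^ e < 1 := by
    intro e he
    obtain ⟨e', rfl⟩ : ∃ e', e = e' + 1 := ⟨e - 1, by omega⟩
    rw [pow_succ q e', show t0 ^ 2 * (q ^ e' * q) = (t0 ^ 2 * q) * q ^ e' by ring, ht0q]
    have h2 : q ^ e' ≤ 1 := pow_le_one₀ (le_of_lt hq0) (le_of_lt hq1)
    have h3 : 0 < q ^ e' := pow_pos hq0 _
    nlinarith
  have ht0sq1 : t0 ^ 2 ≠ 1 := by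
    intro h
    apply ht0ne
    nlinarith
  have hj := j.isLt
  have hgj : getp lam (j:ℕ) = lam j := by simp [getp, hj]
  have hLj0 : 0 ≤ getp lam (j:ℕ) := by rw [hgj]; exact hlam.2 j
  obtain ⟨ℓ, hℓ⟩ : ∃ ℓ : ℕ, getp lam (j:ℕ) = (ℓ:ℤ) := ⟨(getp lam (j:ℕ)).toNat, by omega⟩
  have hd1 : (1:ℝ) - t0 ^ 2 * q ^ (2 * getp lam (j:ℕ)) ≠ 0 := by
    rw [hℓ, show (2 * (ℓ:ℤ)) = ((2*ℓ:ℕ):ℤ) by omega, zpow_natCast]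
    by_cases h0 : ℓ = 0
    · subst h0
      norm_num
      exact fun h => ht0sq1 (by linarith)
    · intro hcon
      nlinarith [hlt1 (2*ℓ) (by omega)]
  constructor
  · intro _hpp
    have hM : Tendsto (fun tt : ℝ =>
        (∏ r, (1 - t r * tauMK tt t0 j * q ^ getp lam (j:ℕ))) /
          ((1 - tauMK tt t0 j ^ 2 * q ^ (2 * getp lam (j:ℕ))) *
           (1 - tauMK tt t0 j ^ 2 * q ^ (2 * getp lam (j:ℕ) + 1))))
        (nhdsWithin 0 (Set.Ioi 0))
        (nhds ((∏ r, (1 - t r * tauMK 0 t0 j * q ^ getp lam (j:ℕ))) /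
          ((1 - tauMK 0 t0 j ^ 2 * q ^ (2 * getp lam (j:ℕ))) *
           (1 - tauMK 0 t0 j ^ 2 * q ^ (2 * getp lam (j:ℕ) + 1))))) := by
      have hd2 : (1:ℝ) - t0 ^ 2 * q ^ (2 * getp lam (j:ℕ) + 1) ≠ 0 := by
        rw [hℓ, show (2 * (ℓ:ℤ) + 1) = ((2*ℓ+1:ℕ):ℤ) by omega, zpow_natCast]
        intro hcon
        nlinarith [hlt1 (2*ℓ+1) (by omega)]
      apply Tendsto.mono_left _ nhdsWithin_le_nhds
      apply ContinuousAt.tendsto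
      apply ContinuousAt.div
      · apply Continuous.continuousAt
        apply continuous_finset_prod
        intro r _
        simp only [tauMK]
        fun_prop
      · apply Continuous.continuousAt
        simp only [tauMK]
        fun_prop
      · by_cases hAj : n - 1 - (j:ℕ) = 0
        · simp only [tauMK, hAj, pow_zero, one_mul]
          exact mul_ne_zero hd1 (by
            rw [hℓ, show (2 * (ℓ:ℤ) + 1) = ((2*ℓ+1:ℕ):ℤ) by omega, zpow_natCast]
            intro hcon
            nlinarith [hlt1 (2*ℓ+1) (by omega)])
        · simp only [tauMK, zero_pow hAj, zero_mul, mul_pow]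
          norm_num
    have hProd : Tendsto (fun tt : ℝ => ∏ k ∈ Finset.univ.erase j, HpF q t0 lam j k tt)
        (nhdsWithin 0 (Set.Ioi 0))
        (nhds (∏ k ∈ Finset.univ.erase j,
          (if (k:ℕ) + 1 = (j:ℕ)
            then 1 - q ^ (getp lam ((j:ℕ)-1) - getp lam (j:ℕ)) else 1))) :=
      tendsto_finset_prod _
        (fun k hk => HpF_tendsto q t0 hq0 lam j k (Finset.ne_of_mem_erase hk))
    have hlim := hM.mul hProd
    obtain ⟨i0, hi0v⟩ : ∃ i : Fin n, (i:ℕ) = (j:ℕ) - 1 := ⟨⟨(j:ℕ)-1, by omega⟩, rfl⟩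
    have hgP : (∏ k ∈ Finset.univ.erase j,
        (if (k:ℕ) + 1 = (j:ℕ)
          then 1 - q ^ (getp lam ((j:ℕ)-1) - getp lam (j:ℕ)) else 1))
        = (if i0 ∈ Finset.univ.erase j
            then 1 - q ^ (getp lam ((j:ℕ)-1) - getp lam (j:ℕ)) else 1) := by
      rw [← Finset.prod_ite_eq' (Finset.univ.erase j) i0
        (fun _ => 1 - q ^ (getp lam ((j:ℕ)-1) - getp lam (j:ℕ)))]
      refine Finset.prod_congr rfl (fun k hk => ?_)
      have hkj : (k:ℕ) ≠ (j:ℕ) :=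
        fun h => (Finset.ne_of_mem_erase hk) (Fin.ext h)
      have hiff : ((k:ℕ) + 1 = (j:ℕ)) ↔ (k = i0) := by
        rw [Fin.ext_iff, hi0v]
        omega
      rw [if_congr hiff rfl rfl]
    rw [hgP] at hlim
    have hfinal : (∏ r, (1 - t r * tauMK 0 t0 j * q ^ getp lam (j:ℕ))) /
          ((1 - tauMK 0 t0 j ^ 2 * q ^ (2 * getp lam (j:ℕ))) *
           (1 - tauMK 0 t0 j ^ 2 * q ^ (2 * getp lam (j:ℕ) + 1))) *
        (if i0 ∈ Finset.univ.erase j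
          then 1 - q ^ (getp lam ((j:ℕ)-1) - getp lam (j:ℕ)) else 1)
        = vplus q t0 t lam j := by
      by_cases hj0 : (j:ℕ) = 0
      · have hnot : i0 ∉ Finset.univ.erase j := by
          simp only [Finset.mem_erase, Finset.mem_univ, and_true, not_not]
          exact Fin.ext (by omega)
        rw [if_neg hnot]
        simp only [vplus, if_pos hj0]
        simp only [tauMK, zero_pow (show n - 1 - (j:ℕ) ≠ 0 by omega), zero_mul, mul_zero]
        norm_num
      · have hmem : i0 ∈ Finset.univ.erase j := by
          simp only [Finset.mem_erase, Finset.mem_univ, and_true]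
          exact fun h => by
            have := congrArg Fin.val h
            omega
        rw [if_pos hmem]
        by_cases hjn1 : (j:ℕ) = n - 1
        · simp only [vplus, if_neg hj0, if_pos hjn1]
          simp only [tauMK, show n - 1 - (j:ℕ) = 0 by omega, pow_zero, one_mul]
          ring
        · simp only [vplus, if_neg hj0, if_neg hjn1]
          simp only [tauMK, zero_pow (show n - 1 - (j:ℕ) ≠ 0 by omega), zero_mul, mul_zero]
          norm_num
    rw [hfinal] at hlim
    refine Tendsto.congr' ?_ hlim
    filter_upwards [self_mem_nhdsWithin] with tt htt
    have httne : tt ≠ 0 := ne_of_gt (Set.mem_Ioi.mp htt)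
    simp only [VP]
    have hP1 : (∏ k ∈ Finset.univ.erase j,
        ((1 - tt * tauMK tt t0 j * tauMK tt t0 k * q ^ (getp lam (j : ℕ) + getp lam (k : ℕ))) *
          (1 - tt * tauMK tt t0 j * (tauMK tt t0 k)⁻¹ *
            q ^ (getp lam (j : ℕ) - getp lam (k : ℕ))) /
        ((1 - tauMK tt t0 j * tauMK tt t0 k * q ^ (getp lam (j : ℕ) + getp lam (k : ℕ))) *
          (1 - tauMK tt t0 j * (tauMK tt t0 k)⁻¹ *
            q ^ (getp lam (j : ℕ) - getp lam (k : ℕ))))))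
        = tt ^ (j:ℕ) * ∏ k ∈ Finset.univ.erase j, HpF q t0 lam j k tt := by
      rw [← prod_ite_lt j tt, ← Finset.prod_mul_distrib]
      refine Finset.prod_congr rfl (fun k hk => ?_)
      exact HpF_eq q t0 ht0ne0 lam j k (Finset.ne_of_mem_erase hk) tt httne
    rw [hP1]
    have hpow : (tt:ℝ) ^ (n-1) = tt ^ (n-1-(j:ℕ)) * tt ^ (j:ℕ) := by
      rw [← pow_add]
      congr 1
      omega
    rw [hpow]
    have hscal : (tt ^ (n-1-(j:ℕ)) * th 0) * (tt ^ (n-1-(j:ℕ)) * tt ^ (j:ℕ) * th 0)⁻¹ *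
        tt ^ (j:ℕ) = 1 := by
      field_simp
    exact rearrP _ _ _ _ _ hscal
  · intro hpm
    have hL1 : 1 ≤ lam j := by
      have h := hpm.2 j
      simp only [Pi.sub_apply, eVec, if_pos] at h
      omega
    have hl1 : 1 ≤ ℓ := by
      rw [hgj] at hℓ
      omega
    have hd3 : (1:ℝ) - t0 ^ 2 * q ^ (2 * getp lam (j:ℕ) - 1) ≠ 0 := by
      rw [hℓ, show (2 * (ℓ:ℤ) - 1) = ((2*ℓ-1:ℕ):ℤ) by omega, zpow_natCast]
      intro hcon
      nlinarith [hlt1 (2*ℓ-1) (by omega)]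
    have hM : Tendsto (fun tt : ℝ =>
        (∏ r, (1 - (t r)⁻¹ * tauMK tt t0 j * q ^ getp lam (j:ℕ))) /
          ((1 - tauMK tt t0 j ^ 2 * q ^ (2 * getp lam (j:ℕ))) *
           (1 - tauMK tt t0 j ^ 2 * q ^ (2 * getp lam (j:ℕ) - 1))))
        (nhdsWithin 0 (Set.Ioi 0))
        (nhds ((∏ r, (1 - (t r)⁻¹ * tauMK 0 t0 j * q ^ getp lam (j:ℕ))) /
          ((1 - tauMK 0 t0 j ^ 2 * q ^ (2 * getp lam (j:ℕ))) *
           (1 - tauMK 0 t0 j ^ 2 * q ^ (2 * getp lam (j:ℕ) - 1))))) := by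
      apply Tendsto.mono_left _ nhdsWithin_le_nhds
      apply ContinuousAt.tendsto
      apply ContinuousAt.div
      · apply Continuous.continuousAt
        apply continuous_finset_prod
        intro r _
        simp only [tauMK]
        fun_prop
      · apply Continuous.continuousAt
        simp only [tauMK]
        fun_prop
      · by_cases hAj : n - 1 - (j:ℕ) = 0
        · simp only [tauMK, hAj, pow_zero, one_mul]
          exact mul_ne_zero hd1 hd3
        · simp only [tauMK, zero_pow hAj, zero_mul, mul_pow]
          norm_num
    have hProd : Tendsto (fun tt : ℝ => ∏ k ∈ Finset.univ.erase j, HmF q t0 lam j k tt)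
        (nhdsWithin 0 (Set.Ioi 0))
        (nhds (∏ k ∈ Finset.univ.erase j,
          ((if (k:ℕ) = (j:ℕ) + 1
              then 1 - q ^ (getp lam (j:ℕ) - getp lam ((j:ℕ)+1)) else 1) *
           (if (j:ℕ) + (k:ℕ) = 2*n - 3
              then 1 - t0 ^ 2 * q ^ (getp lam (n-2) + getp lam (n-1)) else 1)))) :=
      tendsto_finset_prod _
        (fun k hk => HmF_tendsto q t0 hq0 lam j k (Finset.ne_of_mem_erase hk))
    have hlim := hM.mul hProd
    obtain ⟨iP, hiPv⟩ : ∃ i : Fin n,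
        ((j:ℕ)+1 < n ∧ (i:ℕ) = (j:ℕ)+1) ∨ (n ≤ (j:ℕ)+1 ∧ (i:ℕ) = (j:ℕ)) := by
      by_cases h : (j:ℕ)+1 < n
      · exact ⟨⟨(j:ℕ)+1, h⟩, Or.inl ⟨h, rfl⟩⟩
      · exact ⟨j, Or.inr ⟨by omega, rfl⟩⟩
    obtain ⟨iQ, hiQv⟩ : ∃ i : Fin n,
        ((j:ℕ) = n-1 ∧ (i:ℕ) = n-2) ∨ ((j:ℕ) = n-2 ∧ (i:ℕ) = n-1) ∨
          ((j:ℕ)+3 ≤ n ∧ (i:ℕ) = (j:ℕ)) := by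
      by_cases h1 : (j:ℕ) = n-1
      · exact ⟨⟨n-2, by omega⟩, Or.inl ⟨h1, rfl⟩⟩
      · by_cases h2 : (j:ℕ) = n-2
        · exact ⟨⟨n-1, by omega⟩, Or.inr (Or.inl ⟨h2, rfl⟩)⟩
        · exact ⟨j, Or.inr (Or.inr ⟨by omega, rfl⟩)⟩
    have hgm : (∏ k ∈ Finset.univ.erase j,
        ((if (k:ℕ) = (j:ℕ) + 1
            then 1 - q ^ (getp lam (j:ℕ) - getp lam ((j:ℕ)+1)) else 1) *
         (if (j:ℕ) + (k:ℕ) = 2*n - 3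
            then 1 - t0 ^ 2 * q ^ (getp lam (n-2) + getp lam (n-1)) else 1)))
        = (if iP ∈ Finset.univ.erase j
            then 1 - q ^ (getp lam (j:ℕ) - getp lam ((j:ℕ)+1)) else 1) *
          (if iQ ∈ Finset.univ.erase j
            then 1 - t0 ^ 2 * q ^ (getp lam (n-2) + getp lam (n-1)) else 1) := by
      rw [Finset.prod_mul_distrib]
      congr 1
      · rw [← Finset.prod_ite_eq' (Finset.univ.erase j) iP
          (fun _ => 1 - q ^ (getp lam (j:ℕ) - getp lam ((j:ℕ)+1)))]
        refine Finset.prod_congr rfl (fun k hk => ?_)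
        have hkj : (k:ℕ) ≠ (j:ℕ) :=
          fun h => (Finset.ne_of_mem_erase hk) (Fin.ext h)
        have hk2 := k.isLt
        have hiff : ((k:ℕ) = (j:ℕ) + 1) ↔ (k = iP) := by
          rw [Fin.ext_iff]
          rcases hiPv with ⟨h1,h2⟩|⟨h1,h2⟩ <;> omega
        rw [if_congr hiff rfl rfl]
      · rw [← Finset.prod_ite_eq' (Finset.univ.erase j) iQ
          (fun _ => 1 - t0 ^ 2 * q ^ (getp lam (n-2) + getp lam (n-1)))]
        refine Finset.prod_congr rfl (fun k hk => ?_)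
        have hkj : (k:ℕ) ≠ (j:ℕ) :=
          fun h => (Finset.ne_of_mem_erase hk) (Fin.ext h)
        have hk2 := k.isLt
        have hiff : ((j:ℕ) + (k:ℕ) = 2*n - 3) ↔ (k = iQ) := by
          rw [Fin.ext_iff]
          rcases hiQv with ⟨h1,h2⟩|⟨h1,h2⟩|⟨h1,h2⟩ <;> omega
        rw [if_congr hiff rfl rfl]
    rw [hgm] at hlim
    have hfinal : (∏ r, (1 - (t r)⁻¹ * tauMK 0 t0 j * q ^ getp lam (j:ℕ))) /
          ((1 - tauMK 0 t0 j ^ 2 * q ^ (2 * getp lam (j:ℕ))) *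
           (1 - tauMK 0 t0 j ^ 2 * q ^ (2 * getp lam (j:ℕ) - 1))) *
        ((if iP ∈ Finset.univ.erase j
            then 1 - q ^ (getp lam (j:ℕ) - getp lam ((j:ℕ)+1)) else 1) *
         (if iQ ∈ Finset.univ.erase j
            then 1 - t0 ^ 2 * q ^ (getp lam (n-2) + getp lam (n-1)) else 1))
        = vminus q t0 t lam j := by
      by_cases hjn1 : (j:ℕ) = n - 1
      · have hiPn : iP ∉ Finset.univ.erase j := by
          simp only [Finset.mem_erase, Finset.mem_univ, and_true, not_not]
          exact Fin.ext (by rcases hiPv with ⟨h1,h2⟩|⟨h1,h2⟩ <;> omega)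
        have hiQm : iQ ∈ Finset.univ.erase j := by
          simp only [Finset.mem_erase, Finset.mem_univ, and_true]
          intro h
          have := congrArg Fin.val h
          rcases hiQv with ⟨h1,h2⟩|⟨h1,h2⟩|⟨h1,h2⟩ <;> omega
        rw [if_neg hiPn, if_pos hiQm, one_mul]
        simp only [vminus, if_pos hjn1]
        simp only [tauMK, show n - 1 - (j:ℕ) = 0 by omega, pow_zero, one_mul]
        rw [show (j:ℕ) = n - 1 from hjn1]
        ring
      · by_cases hjn2 : (j:ℕ) = n - 2
        · have hiPm : iP ∈ Finset.univ.erase j := by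
            simp only [Finset.mem_erase, Finset.mem_univ, and_true]
            intro h
            have := congrArg Fin.val h
            rcases hiPv with ⟨h1,h2⟩|⟨h1,h2⟩ <;> omega
          have hiQm : iQ ∈ Finset.univ.erase j := by
            simp only [Finset.mem_erase, Finset.mem_univ, and_true]
            intro h
            have := congrArg Fin.val h
            rcases hiQv with ⟨h1,h2⟩|⟨h1,h2⟩|⟨h1,h2⟩ <;> omega
          rw [if_pos hiPm, if_pos hiQm]
          simp only [vminus, if_neg hjn1, if_pos hjn2]
          simp only [tauMK, zero_pow (show n - 1 - (j:ℕ) ≠ 0 by omega), zero_mul, mul_zero]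
          norm_num
        · have hiPm : iP ∈ Finset.univ.erase j := by
            simp only [Finset.mem_erase, Finset.mem_univ, and_true]
            intro h
            have := congrArg Fin.val h
            rcases hiPv with ⟨h1,h2⟩|⟨h1,h2⟩ <;> omega
          have hiQn : iQ ∉ Finset.univ.erase j := by
            simp only [Finset.mem_erase, Finset.mem_univ, and_true, not_not]
            exact Fin.ext (by rcases hiQv with ⟨h1,h2⟩|⟨h1,h2⟩|⟨h1,h2⟩ <;> omega)
          rw [if_pos hiPm, if_neg hiQn, mul_one]
          simp only [vminus, if_neg hjn1, if_neg hjn2]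
          simp only [tauMK, zero_pow (show n - 1 - (j:ℕ) ≠ 0 by omega), zero_mul, mul_zero]
          norm_num
    rw [hfinal] at hlim
    refine Tendsto.congr' ?_ hlim
    filter_upwards [self_mem_nhdsWithin] with tt htt
    have httne : tt ≠ 0 := ne_of_gt (Set.mem_Ioi.mp htt)
    simp only [VM]
    have hP1 : (∏ k ∈ Finset.univ.erase j,
        ((1 - tt⁻¹ * tauMK tt t0 j * tauMK tt t0 k * q ^ (getp lam (j : ℕ) + getp lam (k : ℕ))) *
          (1 - tt⁻¹ * tauMK tt t0 j * (tauMK tt t0 k)⁻¹ *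
            q ^ (getp lam (j : ℕ) - getp lam (k : ℕ))) /
        ((1 - tauMK tt t0 j * tauMK tt t0 k * q ^ (getp lam (j : ℕ) + getp lam (k : ℕ))) *
          (1 - tauMK tt t0 j * (tauMK tt t0 k)⁻¹ *
            q ^ (getp lam (j : ℕ) - getp lam (k : ℕ))))))
        = (tt⁻¹) ^ (j:ℕ) * ∏ k ∈ Finset.univ.erase j, HmF q t0 lam j k tt := by
      rw [← prod_ite_lt j tt⁻¹, ← Finset.prod_mul_distrib]
      refine Finset.prod_congr rfl (fun k hk => ?_)
      exact HmF_eq q t0 ht0ne0 lam j k (Finset.ne_of_mem_erase hk) tt httne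
    rw [hP1]
    have hpow : (tt:ℝ) ^ (n-1) = tt ^ (n-1-(j:ℕ)) * tt ^ (j:ℕ) := by
      rw [← pow_add]
      congr 1
      omega
    rw [hpow]
    have hscal : (tt ^ (n-1-(j:ℕ)) * th 0)⁻¹ * (tt ^ (n-1-(j:ℕ)) * tt ^ (j:ℕ) * th 0) *
        (tt⁻¹) ^ (j:ℕ) = 1 := by
      rw [inv_pow]
      field_simp
    exact rearrM _ _ _ _ _ hscal

end
end

section
/- For λ ∈ Λ and ξ ∈ ℝ^n define the anti-invariant Fourier kernel χ_ξ(λ) = (2π)^{−n/2} i^{−n²} Σ_{w∈W} sign(w) e^{i⟨w(ρ+λ),ξ⟩}, where ρ = (n, n−1, …, 1) and sign(w) = ε_1⋯ε_n · sign(σ) for w = (σ,ε) ∈ W = S_n ⋉ {1,−1}^n. Then for all λ, μ ∈ Λ: ∫_𝔸 χ_ξ(λ) conj(χ_ξ(μ)) dξ = 1 if λ = μ and = 0 if λ ≠ μ, where 𝔸 = {ξ ∈ ℝ^n : π > ξ_1 > ⋯ > ξ_n > 0} and dξ is Lebesgue measure. (Orthonormality of the free anti-invariant Fourier kernel on the hyperoctahedral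 Weyl alcove.) -/
open scoped BigOperators
open MeasureTheory Filter

noncomputable section

attribute [local instance] Classical.propDecidable

/-- sign character of the hyperoctahedral group. -/
def signW {n : ℕ} (w : Equiv.Perm (Fin n) × (Fin n → Bool)) : ℤ :=
  (Equiv.Perm.sign w.1 : ℤ) * ∏ j, (if w.2 j then 1 else -1)

/-- the staircase vector `ρ = (n, n-1, …, 1)`. -/
def rhoV (n : ℕ) : Fin n → ℤ := fun j => (n : ℤ) - (j : ℕ)

/-- the anti-invariant Fourier kernel `χ_ξ(λ)`. -/
def chiKer {n : ℕ} (ξ : Fin n → ℝ) (lam : Fin n → ℤ) : ℂ :=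
  (((2 * Real.pi) ^ (-(n : ℝ) / 2) : ℝ) : ℂ) * Complex.I ^ (-(n ^ 2 : ℤ)) *
    ∑ w : Equiv.Perm (Fin n) × (Fin n → Bool),
      (signW w : ℂ) *
        Complex.exp (Complex.I *
          ∑ j, ((signAct w.1 w.2 (rhoV n + lam) j : ℂ) * (ξ j : ℂ)))

namespace Stmt16Aux

open Complex

variable {n : ℕ}

abbrev G (n : ℕ) := Equiv.Perm (Fin n) × (Fin n → Bool)

/-- real action of a signed permutation -/
def actR (w : G n) (ξ : Fin n → ℝ) : Fin n → ℝ :=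
  fun j => (if w.2 j then (1:ℝ) else -1) * ξ (w.1 j)

def phase (v : Fin n → ℤ) (ξ : Fin n → ℝ) : ℂ :=
  Complex.exp (Complex.I * ∑ j, (v j : ℂ) * (ξ j : ℂ))

def cube (n : ℕ) : Set (Fin n → ℝ) := Set.univ.pi fun _ => Set.Ioo (-Real.pi) Real.pi

def Phi (α β : Fin n → ℤ) (ξ : Fin n → ℝ) : ℂ :=
  ∑ u : G n, ∑ u' : G n, ((signW u * signW u' : ℤ) : ℂ) *
    phase (signAct u.1 u.2 α - signAct u'.1 u'.2 β) ξ

lemma phase_norm (v : Fin n → ℤ) (ξ : Fin n → ℝ) : ‖phase v ξ‖ = 1 := by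
  have h : (∑ j, (v j : ℂ) * (ξ j : ℂ)) = (((∑ j, (v j : ℝ) * ξ j : ℝ)) : ℂ) := by
    push_cast; ring
  rw [phase, h]
  rw [mul_comm]; exact Complex.norm_exp_ofReal_mul_I _

lemma continuous_phase (v : Fin n → ℤ) : Continuous (phase v) := by
  unfold phase
  exact Complex.continuous_exp.comp (continuous_const.mul
    (continuous_finset_sum _ fun j _ => continuous_const.mul
      (Complex.continuous_ofReal.comp (continuous_apply j))))

lemma measurableSet_cube : MeasurableSet (cube n) :=
  MeasurableSet.univ_pi fun _ => measurableSet_Ioo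

lemma cube_volume_lt_top : volume (cube n) < ⊤ := by
  rw [cube, volume_pi_pi]
  exact ENNReal.prod_lt_top fun i _ => by simp [Real.volume_Ioo]

lemma measurableSet_alcove : MeasurableSet (alcove n) := by
  have h : alcove n =
      (⋂ (p : Fin n × Fin n) (_ : p.1 < p.2), {ξ : Fin n → ℝ | ξ p.2 < ξ p.1}) ∩
      ⋂ j, ({ξ : Fin n → ℝ | 0 < ξ j} ∩ {ξ : Fin n → ℝ | ξ j < Real.pi}) := by
    ext ξ
    simp only [alcove, Set.mem_inter_iff, Set.mem_iInter, Set.mem_setOf_eq]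
    constructor
    · rintro ⟨h1, h2⟩
      exact ⟨fun p hp => h1 hp, fun j => h2 j⟩
    · rintro ⟨h1, h2⟩
      exact ⟨fun a b hab => h1 (a, b) hab, h2⟩
  rw [h]
  refine MeasurableSet.inter ?_ ?_
  · exact MeasurableSet.iInter fun p => MeasurableSet.iInter fun _ =>
      measurableSet_lt (measurable_pi_apply _) (measurable_pi_apply _)
  · exact MeasurableSet.iInter fun j =>
      (measurableSet_lt measurable_const (measurable_pi_apply j)).inter
        (measurableSet_lt (measurable_pi_apply j) measurable_const)

lemma alcove_subset_cube : alcove n ⊆ cube n := by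
  rintro ξ ⟨_, h2⟩ j _
  have := Real.pi_pos
  exact ⟨by linarith [(h2 j).1], (h2 j).2⟩

lemma integrableOn_phase {s : Set (Fin n → ℝ)} (hs : MeasurableSet s)
    (hv : volume s < ⊤) (v : Fin n → ℤ) : IntegrableOn (phase v) s := by
  refine Measure.integrableOn_of_bounded (M := 1) hv.ne
    ((continuous_phase v).aestronglyMeasurable) ?_
  filter_upwards with ξ
  rw [phase_norm]

lemma perm_apply_inv_self {α : Type*} (f : Equiv.Perm α) (x : α) : f (f⁻¹ x) = x :=
  f.apply_symm_apply x

lemma perm_inv_apply_self {α : Type*} (f : Equiv.Perm α) (x : α) : f⁻¹ (f x) = x :=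
  f.symm_apply_apply x

lemma strictAnti_eq_of_comp_eq {R : Type*} [LinearOrder R] {a b : Fin n → R}
    (ha : StrictAnti a) (hb : StrictAnti b) {τ τ' : Equiv.Perm (Fin n)}
    (h : ∀ j, a (τ j) = b (τ' j)) : a = b := by
  classical
  set s : Finset R := Finset.image a Finset.univ with hs
  have hcard : s.card = n := by
    rw [hs, Finset.card_image_of_injective _ ha.injective, Finset.card_univ,
      Fintype.card_fin]
  have hbs : ∀ x, b x ∈ s := by
    intro x
    have : b x = a (τ (τ'⁻¹ x)) := by rw [h (τ'⁻¹ x), perm_apply_inv_self]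
    rw [this, hs]
    exact Finset.mem_image_of_mem _ (Finset.mem_univ _)
  have has : ∀ x, a x ∈ s := fun x => Finset.mem_image_of_mem _ (Finset.mem_univ _)
  have hmonoa : StrictMono (fun i : Fin n => a i.rev) := by
    intro i j hij
    exact ha (Fin.rev_lt_rev.mpr hij)
  have hmonob : StrictMono (fun i : Fin n => b i.rev) := by
    intro i j hij
    exact hb (Fin.rev_lt_rev.mpr hij)
  have ea := Finset.orderEmbOfFin_unique hcard (f := fun i : Fin n => a i.rev)
    (fun x => has _) hmonoa
  have eb := Finset.orderEmbOfFin_unique hcard (f := fun i : Fin n => b i.rev)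
    (fun x => hbs _) hmonob
  funext i
  have h1 := congrFun ea i.rev
  have h2 := congrFun eb i.rev
  simp only [Fin.rev_rev] at h1 h2
  rw [h1, h2]

lemma rigid {R : Type*} [Ring R] [LinearOrder R] [IsStrictOrderedRing R] {a b : Fin n → R}
    (ha : StrictAnti a) (hb : StrictAnti b) (ha0 : ∀ j, 0 < a j) (hb0 : ∀ j, 0 < b j)
    {τ τ' : Equiv.Perm (Fin n)} {δ δ' : Fin n → Bool}
    (h : ∀ j, (if δ j then (1:R) else -1) * a (τ j)
        = (if δ' j then (1:R) else -1) * b (τ' j)) :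
    a = b ∧ τ = τ' ∧ δ = δ' := by
  have habs : ∀ j, a (τ j) = b (τ' j) := by
    intro j
    have hj := h j
    have h1 := ha0 (τ j)
    have h2 := hb0 (τ' j)
    cases hd : δ j <;> cases hd' : δ' j <;> rw [hd, hd'] at hj <;> simp at hj <;>
    first
      | exact hj
      | (exfalso
         have hb' : (0:R) < -a (τ j) := by rw [hj]; exact h2
         exact absurd (h1.trans (neg_pos.mp hb')) (lt_irrefl 0))
      | (exfalso
         have hb' : (0:R) < -b (τ' j) := by rw [← hj]; exact h1
         exact absurd (h2.trans (neg_pos.mp hb')) (lt_irrefl 0))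
  have hab : a = b := strictAnti_eq_of_comp_eq ha hb habs
  subst hab
  have hτ : τ = τ' := Equiv.ext fun j => ha.injective (habs j)
  subst hτ
  refine ⟨rfl, rfl, ?_⟩
  funext j
  have hj := h j
  have h1 := ha0 (τ j)
  have hlt : -a (τ j) < a (τ j) := (neg_lt_zero.mpr h1).trans h1
  cases hd : δ j <;> cases hd' : δ' j <;> rw [hd, hd'] at hj <;> simp at hj <;>
  first
    | rfl
    | exact absurd hj (ne_of_lt hlt)
    | exact absurd hj.symm (ne_of_lt hlt)

lemma actR_image_subset_cube (w : G n) : actR w '' alcove n ⊆ cube n := by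
  rintro _ ⟨η, ⟨_, hb⟩, rfl⟩ j _
  have h1 := (hb (w.1 j)).1
  have h2 := (hb (w.1 j)).2
  have hpi := Real.pi_pos
  simp only [actR, Set.mem_Ioo]
  cases hw : w.2 j <;>
    simp only [Bool.false_eq_true, if_false, if_true, neg_one_mul, one_mul] <;>
    constructor <;> nlinarith

lemma measurePreserving_actR (w : G n) : MeasurePreserving (actR w) volume volume := by
  have h1 : MeasurePreserving (fun ξ : Fin n → ℝ => fun j => ξ (w.1 j))
      volume volume := by
    have hmp := MeasureTheory.volume_measurePreserving_piCongrLeft (fun _ : Fin n => ℝ)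
      ((w.1 : Fin n ≃ Fin n).symm)
    have hfn : ⇑(MeasurableEquiv.piCongrLeft (fun _ : Fin n => ℝ)
        ((w.1 : Fin n ≃ Fin n).symm))
        = fun ξ : Fin n → ℝ => fun j => ξ (w.1 j) := by
      funext ξ j
      rw [MeasurableEquiv.coe_piCongrLeft]
      have h2 := Equiv.piCongrLeft_apply_apply (fun _ : Fin n => ℝ)
        ((w.1 : Fin n ≃ Fin n).symm) ξ (w.1 j)
      simpa using h2
    rwa [hfn] at hmp
  have h2 : MeasurePreserving
      (fun ξ : Fin n → ℝ => fun j => (if w.2 j then (1:ℝ) else -1) * ξ j)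
      volume volume := by
    apply MeasureTheory.volume_preserving_pi
    intro j
    cases hw : w.2 j
    · have he : HMul.hMul (if false = true then (1:ℝ) else -1) = Neg.neg := by
        funext x
        show (if false = true then (1:ℝ) else -1) * x = -x
        norm_num
      rw [he]
      exact ⟨measurable_neg, Measure.map_neg_eq_self (volume : Measure ℝ)⟩
    · have he : HMul.hMul (if true = true then (1:ℝ) else -1) = (id : ℝ → ℝ) := by
        funext x
        show (if true = true then (1:ℝ) else -1) * x = x
        norm_num
      rw [he]
      exact MeasurePreserving.id _
  exact h2.comp h1

def actREquiv (w : G n) : (Fin n → ℝ) ≃ (Fin n → ℝ) where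
  toFun := actR w
  invFun := fun η j => (if w.2 (w.1⁻¹ j) then (1:ℝ) else -1) * η (w.1⁻¹ j)
  left_inv := fun ξ => by
    funext j
    simp only [actR, perm_apply_inv_self]
    cases hw : w.2 (w.1⁻¹ j) <;> simp [hw]
  right_inv := fun η => by
    funext j
    simp only [actR, perm_inv_apply_self]
    cases hw : w.2 j <;> simp [hw]

lemma measurableEmbedding_actR (w : G n) : MeasurableEmbedding (actR w) := by
  have m1 : Measurable (actREquiv w : (Fin n → ℝ) → (Fin n → ℝ)) :=
    measurable_pi_iff.2 fun j => (measurable_pi_apply (w.1 j)).const_mul _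
  have m2 : Measurable ((actREquiv w).symm : (Fin n → ℝ) → (Fin n → ℝ)) :=
    measurable_pi_iff.2 fun j => (measurable_pi_apply (w.1⁻¹ j)).const_mul _
  exact (MeasurableEquiv.mk (actREquiv w) m1 m2).measurableEmbedding

lemma hyperplane_null (L : (Fin n → ℝ) →ₗ[ℝ] ℝ) (hL : L ≠ 0) :
    volume {ξ : Fin n → ℝ | L ξ = 0} = 0 := by
  have h : {ξ : Fin n → ℝ | L ξ = 0} = (LinearMap.ker L : Set (Fin n → ℝ)) := rfl
  rw [h]
  apply Measure.addHaar_submodule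
  rw [Ne, LinearMap.ker_eq_top]
  exact hL

def bad (n : ℕ) : Set (Fin n → ℝ) :=
  (⋃ j : Fin n, {ξ | ξ j = 0}) ∪
  ⋃ p : Fin n × Fin n, ⋃ (_ : p.1 ≠ p.2),
    ({ξ | ξ p.1 = ξ p.2} ∪ {ξ | ξ p.1 = -ξ p.2})

lemma bad_null : volume (bad n) = 0 := by
  apply measure_union_null
  · refine measure_iUnion_null fun j => ?_
    have h : {ξ : Fin n → ℝ | ξ j = 0}
        = {ξ : Fin n → ℝ | (LinearMap.proj j : (Fin n → ℝ) →ₗ[ℝ] ℝ) ξ = 0} := rfl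
    rw [h]
    refine hyperplane_null _ fun h0 => one_ne_zero (α := ℝ) ?_
    have := DFunLike.congr_fun h0 (Pi.single j (1:ℝ))
    simpa using this
  · refine measure_iUnion_null fun p => measure_iUnion_null fun hp =>
      measure_union_null ?_ ?_
    · set L : (Fin n → ℝ) →ₗ[ℝ] ℝ :=
        (LinearMap.proj p.1 : (Fin n → ℝ) →ₗ[ℝ] ℝ)
          - (LinearMap.proj p.2 : (Fin n → ℝ) →ₗ[ℝ] ℝ) with hL
      have h : {ξ : Fin n → ℝ | ξ p.1 = ξ p.2} = {ξ : Fin n → ℝ | L ξ = 0} := by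
        ext ξ
        simp [hL, LinearMap.sub_apply, sub_eq_zero]
      rw [h]
      refine hyperplane_null _ fun h0 => one_ne_zero (α := ℝ) ?_
      have := DFunLike.congr_fun h0 (Pi.single p.1 (1:ℝ))
      simpa [hL, LinearMap.sub_apply, Pi.single_eq_of_ne (Ne.symm hp)] using this
    · set L : (Fin n → ℝ) →ₗ[ℝ] ℝ :=
        (LinearMap.proj p.1 : (Fin n → ℝ) →ₗ[ℝ] ℝ)
          + (LinearMap.proj p.2 : (Fin n → ℝ) →ₗ[ℝ] ℝ) with hL
      have h : {ξ : Fin n → ℝ | ξ p.1 = -ξ p.2} = {ξ : Fin n → ℝ | L ξ = 0} := by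
        ext ξ
        simp [hL, LinearMap.add_apply, eq_neg_iff_add_eq_zero]
      rw [h]
      refine hyperplane_null _ fun h0 => one_ne_zero (α := ℝ) ?_
      have := DFunLike.congr_fun h0 (Pi.single p.1 (1:ℝ))
      simpa [hL, LinearMap.add_apply, Pi.single_eq_of_ne (Ne.symm hp)] using this

lemma cube_diff_subset_bad :
    cube n \ (⋃ w : G n, actR w '' alcove n) ⊆ bad n := by
  rintro ξ ⟨hc, hu⟩
  by_contra hbad
  apply hu
  simp only [bad, Set.mem_union, Set.mem_iUnion, Set.mem_setOf_eq, not_or,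
    not_exists] at hbad
  obtain ⟨h0, hne⟩ := hbad
  have habs : ∀ j k : Fin n, j ≠ k → |ξ j| ≠ |ξ k| := by
    intro j k hjk h
    rcases abs_eq_abs.mp h with h' | h'
    · exact (hne (j, k) hjk).1 h'
    · exact (hne (j, k) hjk).2 h'
  set σ := Tuple.sort (fun j => -|ξ j|) with hσ
  have hmono : Monotone ((fun j => -|ξ j|) ∘ σ) := Tuple.monotone_sort _
  set η : Fin n → ℝ := fun k => |ξ (σ k)| with hη
  have hanti : StrictAnti η := by
    intro k l hkl
    have hle : -|ξ (σ k)| ≤ -|ξ (σ l)| := hmono hkl.le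
    have hne2 : |ξ (σ l)| ≠ |ξ (σ k)| :=
      habs _ _ (fun e => hkl.ne' (σ.injective e))
    have : η l ≤ η k := by simpa [hη] using hle
    exact lt_of_le_of_ne this hne2
  have hηa : η ∈ alcove n := by
    refine ⟨hanti, fun k => ⟨abs_pos.2 (h0 (σ k)), ?_⟩⟩
    have hk := hc (σ k) (Set.mem_univ _)
    exact abs_lt.2 ⟨hk.1, hk.2⟩
  refine Set.mem_iUnion.2 ⟨(σ⁻¹, fun j => decide (0 < ξ j)), η, hηa, ?_⟩
  funext j
  simp only [actR, hη, perm_apply_inv_self]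
  by_cases hpos : 0 < ξ j
  · simp [hpos, abs_of_pos hpos]
  · have hneg : ξ j < 0 := lt_of_le_of_ne (not_lt.mp hpos) (h0 j)
    simp [hpos, abs_of_neg hneg]

lemma cube_ae_union :
    (cube n : Set (Fin n → ℝ)) =ᵐ[volume] ⋃ w : G n, actR w '' alcove n := by
  rw [MeasureTheory.ae_eq_set]
  constructor
  · exact measure_mono_null cube_diff_subset_bad bad_null
  · have h : (⋃ w : G n, actR w '' alcove n) \ cube n = ∅ :=
      Set.diff_eq_empty.2 (Set.iUnion_subset fun w => actR_image_subset_cube w)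
    rw [h]
    exact measure_empty

lemma pairwise_disjoint_images :
    Pairwise (Function.onFun Disjoint (fun w : G n => actR w '' alcove n)) := by
  intro w w' hww
  rw [Function.onFun, Set.disjoint_left]
  rintro _ ⟨η, hη, rfl⟩ ⟨η', hη', heq⟩
  have h : ∀ j, (if w'.2 j then (1:ℝ) else -1) * η' (w'.1 j)
      = (if w.2 j then (1:ℝ) else -1) * η (w.1 j) := by
    intro j
    have := congrFun heq j
    simpa [actR] using this
  obtain ⟨hab, hτ, hδ⟩ := rigid hη'.1 hη.1 (fun j => (hη'.2 j).1)
    (fun j => (hη.2 j).1) h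
  exact hww (Prod.ext hτ.symm hδ.symm)

/-! ### composition of signed permutations -/

def cmp (w u : G n) : G n := (u.1 * w.1, fun j => w.2 j == u.2 (w.1 j))

lemma signAct_cmp (w u : G n) (v : Fin n → ℤ) :
    signAct w.1 w.2 (signAct u.1 u.2 v) = signAct (cmp w u).1 (cmp w u).2 v := by
  funext j
  simp only [signAct, cmp, Equiv.Perm.mul_apply]
  rcases Bool.dichotomy (w.2 j) with hw | hw <;>
    rcases Bool.dichotomy (u.2 (w.1 j)) with hu | hu <;>
    simp only [hw, hu] <;> simp <;> ring

lemma signAct_sub (σ : Equiv.Perm (Fin n)) (ε : Fin n → Bool) (x y : Fin n → ℤ) :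
    signAct σ ε (x - y) = signAct σ ε x - signAct σ ε y := by
  funext j
  simp only [signAct, Pi.sub_apply, mul_sub]

lemma signW_cmp (w u : G n) : signW (cmp w u) = signW w * signW u := by
  simp only [signW, cmp]
  have hs : (Equiv.Perm.sign (u.1 * w.1) : ℤ)
      = (Equiv.Perm.sign u.1 : ℤ) * (Equiv.Perm.sign w.1 : ℤ) := by
    rw [map_mul]; push_cast; ring
  have hb : (∏ j, if (w.2 j == u.2 (w.1 j)) = true then (1:ℤ) else -1)
      = (∏ j, if w.2 j = true then (1:ℤ) else -1)
        * ∏ j, (if u.2 (w.1 j) = true then (1:ℤ) else -1) := by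
    rw [← Finset.prod_mul_distrib]
    refine Finset.prod_congr rfl fun j _ => ?_
    cases hw : w.2 j <;> cases hu : u.2 (w.1 j) <;> simp [hw, hu]
  have hc : (∏ j, if u.2 (w.1 j) = true then (1:ℤ) else -1)
      = ∏ j, (if u.2 j = true then (1:ℤ) else -1) :=
    Equiv.prod_comp w.1 (fun j => if u.2 j = true then (1:ℤ) else -1)
  rw [hs]; erw [hb, hc]
  ring

lemma signW_mul_self (w : G n) : signW w * signW w = 1 := by
  have h1 : (Equiv.Perm.sign w.1 : ℤ) * (Equiv.Perm.sign w.1 : ℤ) = 1 := by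
    rcases Int.units_eq_one_or (Equiv.Perm.sign w.1) with h | h <;> rw [h] <;> simp
  have h2 : (∏ j, if w.2 j = true then (1:ℤ) else -1)
      * (∏ j, if w.2 j = true then (1:ℤ) else -1) = 1 := by
    rw [← Finset.prod_mul_distrib]
    rw [Finset.prod_eq_one]
    intro j _
    cases hw : w.2 j <;> simp [hw]
  calc signW w * signW w
      = ((Equiv.Perm.sign w.1 : ℤ) * (Equiv.Perm.sign w.1 : ℤ))
        * ((∏ j, if w.2 j = true then (1:ℤ) else -1)
          * (∏ j, if w.2 j = true then (1:ℤ) else -1)) := by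
        simp only [signW]; ring
    _ = 1 := by rw [h1, h2]; ring

def cmpEquiv (w : G n) : G n ≃ G n where
  toFun := cmp w
  invFun := fun a => (a.1 * w.1⁻¹, fun k => w.2 (w.1⁻¹ k) == a.2 (w.1⁻¹ k))
  left_inv := by
    rintro ⟨σ, ε⟩
    refine Prod.ext ?_ ?_
    · simp [cmp, mul_assoc]
    · funext k
      simp only [cmp, perm_apply_inv_self]
      cases hb : w.2 (w.1⁻¹ k) <;> cases hc : ε k <;> simp [hb, hc]
  right_inv := by
    rintro ⟨σ, ε⟩
    refine Prod.ext ?_ ?_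
    · simp [cmp, mul_assoc]
    · funext j
      simp only [cmp, perm_inv_apply_self]
      cases hb : w.2 j <;> cases hc : ε j <;> simp [hb, hc]

lemma signW_cmp_pair (w a b : G n) :
    signW (cmp w a) * signW (cmp w b) = signW a * signW b := by
  rw [signW_cmp, signW_cmp]
  calc (signW w * signW a) * (signW w * signW b)
      = (signW w * signW w) * (signW a * signW b) := by ring
    _ = signW a * signW b := by rw [signW_mul_self]; ring

/-! ### phase lemmas -/

/-- the element implementing `actR w` on phases -/
def wst (w : G n) : G n := (w.1⁻¹, fun k => w.2 (w.1⁻¹ k))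

lemma phase_act (v : Fin n → ℤ) (w : G n) (ξ : Fin n → ℝ) :
    phase v (actR w ξ) = phase (signAct (wst w).1 (wst w).2 v) ξ := by
  unfold phase
  congr 2
  rw [← Equiv.sum_comp w.1
    (fun k => ((signAct (wst w).1 (wst w).2 v k : ℂ) * (ξ k : ℂ)))]
  refine Finset.sum_congr rfl fun j _ => ?_
  simp only [signAct, actR, wst, perm_inv_apply_self]
  cases hw : w.2 j <;> simp [hw] <;> push_cast <;> ring

lemma conj_phase (v : Fin n → ℤ) (ξ : Fin n → ℝ) :
    (starRingEnd ℂ) (phase v ξ) = phase (-v) ξ := by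
  unfold phase
  rw [← Complex.exp_conj]
  congr 1
  rw [map_mul, Complex.conj_I, map_sum]
  have h : ∀ j, (starRingEnd ℂ) ((v j : ℂ) * (ξ j : ℂ)) = (v j : ℂ) * (ξ j : ℂ) := by
    intro j
    rw [map_mul, Complex.conj_ofReal, map_intCast]
  simp only [h, Pi.neg_apply, Int.cast_neg, neg_mul, Finset.sum_neg_distrib]
  ring

lemma phase_mul (v v' : Fin n → ℤ) (ξ : Fin n → ℝ) :
    phase v ξ * phase v' ξ = phase (v + v') ξ := by
  unfold phase
  rw [← Complex.exp_add, ← mul_add]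
  congr 2
  rw [← Finset.sum_add_distrib]
  refine Finset.sum_congr rfl fun j _ => ?_
  simp only [Pi.add_apply]
  push_cast
  ring

/-! ### the one-dimensional integral -/

lemma integral_phase_one {k : ℤ} (hk : k ≠ 0) :
    ∫ x in Set.Ioo (-Real.pi) Real.pi, Complex.exp (Complex.I * k * x) = 0 := by
  have hle : -Real.pi ≤ Real.pi := by linarith [Real.pi_pos]
  rw [← MeasureTheory.integral_Ioc_eq_integral_Ioo,
    ← intervalIntegral.integral_of_le hle]
  have hc : Complex.I * k ≠ 0 := by
    simp [Complex.I_ne_zero, hk]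
  rw [integral_exp_mul_complex hc]
  have h1 : Complex.I * k * Real.pi = k * (Real.pi * Complex.I) := by ring
  have h2 : Complex.I * k * (-Real.pi : ℝ) = ((-k : ℤ) : ℂ) * (Real.pi * Complex.I) := by
    push_cast; ring
  rw [h1, h2, Complex.exp_int_mul, Complex.exp_int_mul, Complex.exp_pi_mul_I]
  rcases Int.even_or_odd k with he | ho
  · rw [he.neg_one_zpow, (he.neg).neg_one_zpow]
    simp
  · rw [ho.neg_one_zpow, (ho.neg).neg_one_zpow]
    simp

lemma integral_phase_cube (v : Fin n → ℤ) :
    ∫ ξ in cube n, phase v ξ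
      = if v = 0 then (((2 * Real.pi) ^ n : ℝ) : ℂ) else 0 := by
  classical
  have hfact : ∀ ξ : Fin n → ℝ,
      phase v ξ = ∏ j, Complex.exp (Complex.I * v j * ξ j) := by
    intro ξ
    rw [phase, ← Complex.exp_sum]
    congr 1
    rw [Finset.mul_sum]
    refine Finset.sum_congr rfl fun j _ => by ring
  have hind : ∀ ξ : Fin n → ℝ,
      Set.indicator (cube n) (fun ξ => ∏ j, Complex.exp (Complex.I * v j * ξ j)) ξ
      = ∏ j, Set.indicator (Set.Ioo (-Real.pi) Real.pi)
          (fun x : ℝ => Complex.exp (Complex.I * v j * x)) (ξ j) := by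
    intro ξ
    by_cases h : ξ ∈ cube n
    · rw [Set.indicator_of_mem h]
      exact Finset.prod_congr rfl fun j _ =>
        (Set.indicator_of_mem (h j (Set.mem_univ _))
          (fun x : ℝ => Complex.exp (Complex.I * v j * x))).symm
    · rw [Set.indicator_of_notMem h]
      have : ∃ j, ξ j ∉ Set.Ioo (-Real.pi) Real.pi := by
        by_contra hcon
        push_neg at hcon
        exact h fun j _ => hcon j
      obtain ⟨j, hj⟩ := this
      exact (Finset.prod_eq_zero (Finset.mem_univ j)
        (Set.indicator_of_notMem hj
          (fun x : ℝ => Complex.exp (Complex.I * v j * x)))).symm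
  calc ∫ ξ in cube n, phase v ξ
      = ∫ ξ in cube n, ∏ j, Complex.exp (Complex.I * v j * ξ j) :=
        MeasureTheory.setIntegral_congr_fun measurableSet_cube fun ξ _ => hfact ξ
    _ = ∫ ξ : Fin n → ℝ, Set.indicator (cube n)
          (fun ξ => ∏ j, Complex.exp (Complex.I * v j * ξ j)) ξ :=
        (MeasureTheory.integral_indicator measurableSet_cube).symm
    _ = ∫ ξ : Fin n → ℝ, ∏ j, Set.indicator (Set.Ioo (-Real.pi) Real.pi)
          (fun x : ℝ => Complex.exp (Complex.I * v j * x)) (ξ j) :=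
        integral_congr_ae (Filter.Eventually.of_forall hind)
    _ = ∏ j, ∫ x : ℝ, Set.indicator (Set.Ioo (-Real.pi) Real.pi)
          (fun x : ℝ => Complex.exp (Complex.I * v j * x)) x := by
        exact MeasureTheory.integral_fintype_prod_eq_prod (ι := Fin n) _
    _ = ∏ j, ∫ x in Set.Ioo (-Real.pi) Real.pi, Complex.exp (Complex.I * v j * x) := by
        exact Finset.prod_congr rfl fun j _ =>
          MeasureTheory.integral_indicator measurableSet_Ioo
    _ = if v = 0 then (((2 * Real.pi) ^ n : ℝ) : ℂ) else 0 := by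
        by_cases hv : v = 0
        · subst hv
          rw [if_pos rfl]
          have h1 : ∀ j : Fin n, (∫ x in Set.Ioo (-Real.pi) Real.pi,
              Complex.exp (Complex.I * (((0 : Fin n → ℤ) j : ℂ)) * (x : ℂ)))
              = ((2 * Real.pi : ℝ) : ℂ) := by
            intro j
            simp only [Pi.zero_apply, Int.cast_zero, mul_zero, zero_mul,
              Complex.exp_zero]
            rw [MeasureTheory.setIntegral_const, Real.volume_real_Ioo_of_le (by linarith [Real.pi_pos]), Complex.real_smul,
              mul_one]
            push_cast
            ring
          rw [Finset.prod_congr rfl fun j _ => h1 j, Finset.prod_const,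
            Finset.card_univ, Fintype.card_fin]
          push_cast
          ring
        · rw [if_neg hv]
          obtain ⟨j, hj⟩ : ∃ j, v j ≠ 0 := by
            by_contra hcon
            push_neg at hcon
            exact hv (funext hcon)
          exact Finset.prod_eq_zero (Finset.mem_univ j) (integral_phase_one hj)

/-! ### properties of `Phi` -/

lemma integrableOn_Phi {s : Set (Fin n → ℝ)} (hs : MeasurableSet s)
    (hv : volume s < ⊤) (α β : Fin n → ℤ) : IntegrableOn (Phi α β) s := by
  unfold Phi
  apply MeasureTheory.integrable_finset_sum
  intro u _
  apply MeasureTheory.integrable_finset_sum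
  intro u' _
  exact (integrableOn_phase hs hv _).const_mul _

lemma Phi_act (α β : Fin n → ℤ) (w : G n) (ξ : Fin n → ℝ) :
    Phi α β (actR w ξ) = Phi α β ξ := by
  unfold Phi
  have hterm : ∀ u u' : G n,
      ((signW u * signW u' : ℤ) : ℂ) *
        phase (signAct u.1 u.2 α - signAct u'.1 u'.2 β) (actR w ξ)
      = ((signW (cmp (wst w) u) * signW (cmp (wst w) u') : ℤ) : ℂ) *
        phase (signAct (cmp (wst w) u).1 (cmp (wst w) u).2 α
          - signAct (cmp (wst w) u').1 (cmp (wst w) u').2 β) ξ := by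
    intro u u'
    rw [phase_act, signAct_sub, signAct_cmp (wst w) u, signAct_cmp (wst w) u',
      signW_cmp_pair]
  rw [Finset.sum_congr rfl fun u _ => Finset.sum_congr rfl fun u' _ => hterm u u']
  refine Fintype.sum_equiv (cmpEquiv (wst w)) _ _ fun u => ?_
  exact Fintype.sum_equiv (cmpEquiv (wst w)) _ _ fun u' => rfl

lemma integral_image_actR (α β : Fin n → ℤ) (w : G n) :
    ∫ ξ in actR w '' alcove n, Phi α β ξ = ∫ ξ in alcove n, Phi α β ξ := by
  rw [(measurePreserving_actR w).setIntegral_image_emb (measurableEmbedding_actR w)]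
  exact integral_congr_ae (Filter.Eventually.of_forall fun ξ => Phi_act α β w ξ)

lemma integral_cube_eq_card_mul (α β : Fin n → ℤ) :
    ∫ ξ in cube n, Phi α β ξ
      = (Fintype.card (G n) : ℂ) * ∫ ξ in alcove n, Phi α β ξ := by
  have hms : ∀ w : G n, MeasurableSet (actR w '' alcove n) := fun w =>
    (measurableEmbedding_actR w).measurableSet_image.2 measurableSet_alcove
  have hint : ∀ w : G n, IntegrableOn (Phi α β) (actR w '' alcove n) := fun w =>
    integrableOn_Phi (hms w)
      (lt_of_le_of_lt (measure_mono (actR_image_subset_cube w)) cube_volume_lt_top) α β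
  rw [MeasureTheory.setIntegral_congr_set cube_ae_union,
    MeasureTheory.integral_iUnion_fintype hms pairwise_disjoint_images hint]
  rw [Finset.sum_congr rfl fun w _ => integral_image_actR α β w]
  rw [Finset.sum_const, Finset.card_univ, nsmul_eq_mul]

/-! ### strict antitonicity of `ρ + λ` -/

lemma rho_add_strictAnti {lam : Fin n → ℤ} (h : IsPart lam) :
    StrictAnti (rhoV n + lam) := by
  intro j k hjk
  have h1 : lam k ≤ lam j := h.1 j k hjk.le
  have h2 : (j : ℕ) < (k : ℕ) := hjk
  have h3 : ((j : ℕ) : ℤ) < ((k : ℕ) : ℤ) := by exact_mod_cast h2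
  simp only [Pi.add_apply, rhoV]
  omega

lemma rho_add_pos {lam : Fin n → ℤ} (h : IsPart lam) (j : Fin n) :
    0 < (rhoV n + lam) j := by
  have h1 : 0 ≤ lam j := h.2 j
  have h2 : (j : ℕ) < n := j.2
  have h3 : ((j : ℕ) : ℤ) < (n : ℤ) := by exact_mod_cast h2
  simp only [Pi.add_apply, rhoV]
  omega

/-! ### value of the cube integral -/

lemma integral_cube_val {lam mu : Fin n → ℤ} (hlam : IsPart lam) (hmu : IsPart mu) :
    ∫ ξ in cube n, Phi (rhoV n + lam) (rhoV n + mu) ξ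
      = if lam = mu then (Fintype.card (G n) : ℂ) * (((2 * Real.pi) ^ n : ℝ) : ℂ)
        else 0 := by
  classical
  set α := rhoV n + lam with hα
  set β := rhoV n + mu with hβ
  have hαa : StrictAnti α := rho_add_strictAnti hlam
  have hβa : StrictAnti β := rho_add_strictAnti hmu
  have hα0 : ∀ j, 0 < α j := rho_add_pos hlam
  have hβ0 : ∀ j, 0 < β j := rho_add_pos hmu
  unfold Phi
  rw [MeasureTheory.integral_finset_sum _ fun u _ =>
    (MeasureTheory.integrable_finset_sum _ fun u' _ =>
      ((integrableOn_phase measurableSet_cube cube_volume_lt_top _).const_mul _))]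
  rw [Finset.sum_congr rfl fun u (_ : u ∈ Finset.univ) =>
    MeasureTheory.integral_finset_sum _ fun u' _ =>
      ((integrableOn_phase measurableSet_cube cube_volume_lt_top _).const_mul _)]
  simp_rw [MeasureTheory.integral_const_mul]
  have key : ∀ u u' : G n,
      (signAct u.1 u.2 α - signAct u'.1 u'.2 β = 0) ↔ (lam = mu ∧ u = u') := by
    intro u u'
    rw [sub_eq_zero]
    constructor
    · intro h
      have h' : ∀ j, (if u.2 j then (1:ℤ) else -1) * α (u.1 j)
          = (if u'.2 j then (1:ℤ) else -1) * β (u'.1 j) := fun j => congrFun h j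
      obtain ⟨hab, hτ, hδ⟩ := rigid hαa hβa hα0 hβ0 h'
      refine ⟨?_, Prod.ext hτ hδ⟩
      funext j
      have := congrFun hab j
      simp only [hα, hβ, Pi.add_apply] at this
      omega
    · rintro ⟨h1, h2⟩
      rw [show β = α by rw [hα, hβ, h1], h2]
  have hval : ∀ u u' : G n,
      ((signW u * signW u' : ℤ) : ℂ) * ∫ ξ in cube n,
        phase (signAct u.1 u.2 α - signAct u'.1 u'.2 β) ξ
      = if lam = mu ∧ u = u' then
          ((signW u * signW u' : ℤ) : ℂ) * (((2 * Real.pi) ^ n : ℝ) : ℂ) else 0 := by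
    intro u u'
    rw [integral_phase_cube]
    by_cases h : lam = mu ∧ u = u'
    · rw [if_pos ((key u u').mpr h), if_pos h]
    · rw [if_neg (fun h0 => h ((key u u').mp h0)), if_neg h, mul_zero]
  rw [Finset.sum_congr rfl fun u (_ : u ∈ Finset.univ) =>
    Finset.sum_congr rfl fun u' _ => hval u u']
  by_cases hlm : lam = mu
  · subst hlm
    rw [if_pos rfl]
    have hrow : ∀ u : G n,
        (∑ u' : G n, if lam = lam ∧ u = u' then
          ((signW u * signW u' : ℤ) : ℂ) * (((2 * Real.pi) ^ n : ℝ) : ℂ) else 0)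
        = (((2 * Real.pi) ^ n : ℝ) : ℂ) := by
      intro u
      rw [Finset.sum_eq_single u]
      · rw [if_pos ⟨rfl, rfl⟩]
        have h1 := signW_mul_self u
        rw [show ((signW u * signW u : ℤ) : ℂ) = 1 by rw [h1]; norm_num, one_mul]
      · intro b _ hb
        rw [if_neg (fun h => hb h.2.symm)]
      · intro h
        exact absurd (Finset.mem_univ u) h
    rw [Finset.sum_congr rfl fun u (_ : u ∈ Finset.univ) => hrow u,
      Finset.sum_const, Finset.card_univ, nsmul_eq_mul]
  · rw [if_neg hlm]
    refine Finset.sum_eq_zero fun u _ => Finset.sum_eq_zero fun u' _ => ?_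
    rw [if_neg (fun h => hlm h.1)]

/-! ### pointwise expansion of the kernel product -/

lemma chi_mul_conj (lam mu : Fin n → ℤ) (ξ : Fin n → ℝ) :
    chiKer ξ lam * (starRingEnd ℂ) (chiKer ξ mu)
      = ((((2 * Real.pi) ^ n)⁻¹ : ℝ) : ℂ) * Phi (rhoV n + lam) (rhoV n + mu) ξ := by
  set A : ℂ := (((2 * Real.pi) ^ (-(n : ℝ) / 2) : ℝ) : ℂ) with hA
  set B : ℂ := Complex.I ^ (-(n ^ 2 : ℤ)) with hB
  set S1 : ℂ := ∑ u : G n, (signW u : ℂ) * phase (signAct u.1 u.2 (rhoV n + lam)) ξ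
    with hS1
  set S2 : ℂ := ∑ u : G n, (signW u : ℂ) * phase (-(signAct u.1 u.2 (rhoV n + mu))) ξ
    with hS2
  have hchil : chiKer ξ lam = A * B * S1 := rfl
  have hchim : chiKer ξ mu = A * B *
      ∑ u : G n, (signW u : ℂ) * phase (signAct u.1 u.2 (rhoV n + mu)) ξ := rfl
  have hconjA : (starRingEnd ℂ) A = A := Complex.conj_ofReal _
  have hconjS : (starRingEnd ℂ)
      (∑ u : G n, (signW u : ℂ) * phase (signAct u.1 u.2 (rhoV n + mu)) ξ) = S2 := by
    rw [map_sum, hS2]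
    refine Finset.sum_congr rfl fun u _ => ?_
    rw [map_mul, conj_phase, map_intCast]
  have hBB : B * (starRingEnd ℂ) B = 1 := by
    rw [hB, Complex.mul_conj]
    norm_cast
    rw [Complex.normSq_eq_norm_sq, norm_zpow, Complex.norm_I, one_zpow, one_pow]
  have hAA : A * A = ((((2 * Real.pi) ^ n)⁻¹ : ℝ) : ℂ) := by
    rw [hA, ← Complex.ofReal_mul]
    congr 1
    rw [← Real.rpow_add (by positivity),
      show (-(n : ℝ) / 2 + -(n : ℝ) / 2) = -(n : ℝ) by ring,
      Real.rpow_neg (by positivity), Real.rpow_natCast]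
  have hSS : S1 * S2 = Phi (rhoV n + lam) (rhoV n + mu) ξ := by
    rw [hS1, hS2, Finset.sum_mul_sum]
    unfold Phi
    refine Finset.sum_congr rfl fun u _ => Finset.sum_congr rfl fun u' _ => ?_
    rw [show ((signW u : ℂ) * phase (signAct u.1 u.2 (rhoV n + lam)) ξ)
          * ((signW u' : ℂ) * phase (-(signAct u'.1 u'.2 (rhoV n + mu))) ξ)
        = ((signW u : ℂ) * (signW u' : ℂ))
          * (phase (signAct u.1 u.2 (rhoV n + lam)) ξ
            * phase (-(signAct u'.1 u'.2 (rhoV n + mu))) ξ) from by ring]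
    rw [phase_mul]
    push_cast
    rw [sub_eq_add_neg]
  rw [hchil, hchim, map_mul, map_mul, hconjA, hconjS]
  rw [show A * B * S1 * (A * (starRingEnd ℂ) B * S2)
      = (A * A) * (B * (starRingEnd ℂ) B) * (S1 * S2) from by ring]
  rw [hAA, hBB, hSS, mul_one]

end Stmt16Aux


/-- Orthonormality of the free anti-invariant Fourier kernel on
the hyperoctahedral Weyl alcove. -/
theorem stmt16 {n : ℕ} (hn : 1 ≤ n) (lam mu : Fin n → ℤ)
    (hlam : IsPart lam) (hmu : IsPart mu) :
    (∫ ξ in alcove n, chiKer ξ lam * (starRingEnd ℂ) (chiKer ξ mu)) =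
      if lam = mu then 1 else 0 := by
  have hcard : (Fintype.card (Stmt16Aux.G n) : ℂ) ≠ 0 :=
    Nat.cast_ne_zero.mpr Fintype.card_ne_zero
  have h2pi : ((2 * Real.pi) ^ n : ℝ) ≠ 0 := by positivity
  rw [MeasureTheory.setIntegral_congr_fun Stmt16Aux.measurableSet_alcove
    (fun ξ _ => Stmt16Aux.chi_mul_conj lam mu ξ)]
  rw [MeasureTheory.integral_const_mul]
  have halc : ∫ ξ in alcove n, Stmt16Aux.Phi (rhoV n + lam) (rhoV n + mu) ξ
      = if lam = mu then (((2 * Real.pi) ^ n : ℝ) : ℂ) else 0 := by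
    apply mul_left_cancel₀ hcard
    rw [← Stmt16Aux.integral_cube_eq_card_mul,
      Stmt16Aux.integral_cube_val hlam hmu]
    by_cases h : lam = mu
    · rw [if_pos h, if_pos h]
    · rw [if_neg h, if_neg h, mul_zero]
  rw [halc]
  by_cases h : lam = mu
  · rw [if_pos h, if_pos h, ← Complex.ofReal_mul, inv_mul_cancel₀ h2pi,
      Complex.ofReal_one]
  · rw [if_neg h, if_neg h, mul_zero]
end
end
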